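/- arXiv:2012.01483 — 7 statements merged into one kernel-verified Lean document; each statement's English description precedes it below -/
import Mathlib

section
/- In any triangulation of the 2-dimensional sphere there exist two adjacent vertices v and w with deg(v) ≤ 11 and deg(w) ≤ 11. -/
/-- **In any triangulation of the 2-sphere there exist two adjacent vertices of degree ≤ 11.**
A triangulation of S² is given combinatorially: a finite vertex set `V`, a set `faces` of
3-element subsets covering every vertex, whose edges (the 2-element subsets of faces) each lie
in exactly two faces, every vertex has degree at least 3, and Euler's formula
`V - E + F = 2` holds.  The degree of a vertex is the number of edges incident to it. -/
theorem exists_adjacent_low_degree {V : Type*} [Fintype V] [DecidableEq V]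
    (faces : Finset (Finset V)) (edges : Finset (Finset V))
    (hedges : edges = faces.biUnion fun f => f.powersetCard 2)
    (hcard : ∀ f ∈ faces, f.card = 3)
    (hcover : ∀ v : V, ∃ f ∈ faces, v ∈ f)
    (htwo : ∀ e ∈ edges, (faces.filter fun f => e ⊆ f).card = 2)
    (hdeg : ∀ v : V, 3 ≤ (edges.filter fun e => v ∈ e).card)
    (heuler : (Fintype.card V : ℤ) - (edges.card : ℤ) + (faces.card : ℤ) = 2) :
    ∃ v w : V, ({v, w} : Finset V) ∈ edges ∧
      (edges.filter fun e => v ∈ e).card ≤ 11 ∧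
      (edges.filter fun e => w ∈ e).card ≤ 11 := by
  classical
  by_contra hcon
  push_neg at hcon
  set deg : V → ℕ := fun v => (edges.filter fun e => v ∈ e).card with hdegdef
  -- every edge has exactly 2 elements
  have hecard : ∀ e ∈ edges, e.card = 2 := by
    intro e he
    rw [hedges, Finset.mem_biUnion] at he
    obtain ⟨f, _, he⟩ := he
    exact (Finset.mem_powersetCard.mp he).2
  -- all 2-subsets of a face are edges
  have hsub : ∀ f ∈ faces, f.powersetCard 2 ⊆ edges := by
    intro f hf
    rw [hedges]
    exact Finset.subset_biUnion_of_mem _ hf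
  -- handshake : sum of degrees = 2E
  have hhand : ∑ v : V, deg v = 2 * edges.card := by
    have h1 : ∑ v : V, deg v = ∑ e ∈ edges, e.card := by
      simp only [hdegdef, Finset.card_filter]
      rw [Finset.sum_comm]
      refine Finset.sum_congr rfl fun e _ => ?_
      rw [← Finset.card_filter]
      congr 1
      ext v; simp
    rw [h1, Finset.sum_congr rfl hecard, Finset.sum_const, smul_eq_mul, mul_comm]
  -- 3F = 2E
  have h3F : 3 * faces.card = 2 * edges.card := by
    have key : ∑ f ∈ faces, (edges.filter fun e => e ⊆ f).card
        = ∑ e ∈ edges, (faces.filter fun f => e ⊆ f).card := by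
      simp only [Finset.card_filter]
      exact Finset.sum_comm
    have hL : ∀ f ∈ faces, (edges.filter fun e => e ⊆ f).card = 3 := by
      intro f hf
      have heq : edges.filter (fun e => e ⊆ f) = f.powersetCard 2 := by
        ext e
        simp only [Finset.mem_filter, Finset.mem_powersetCard]
        constructor
        · rintro ⟨he, hef⟩; exact ⟨hef, hecard e he⟩
        · rintro ⟨hef, hc⟩
          exact ⟨hsub f hf (Finset.mem_powersetCard.mpr ⟨hef, hc⟩), hef⟩
      rw [heq, Finset.card_powersetCard, hcard f hf]
      decide
    calc 3 * faces.card = ∑ f ∈ faces, 3 := by rw [Finset.sum_const, smul_eq_mul, mul_comm]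
      _ = ∑ f ∈ faces, (edges.filter fun e => e ⊆ f).card := (Finset.sum_congr rfl hL).symm
      _ = ∑ e ∈ edges, (faces.filter fun f => e ⊆ f).card := key
      _ = ∑ e ∈ edges, 2 := Finset.sum_congr rfl htwo
      _ = 2 * edges.card := by rw [Finset.sum_const, smul_eq_mul, mul_comm]
  -- the number of faces containing v equals deg v
  have hfA : ∀ v : V, (faces.filter fun f => v ∈ f).card = deg v := by
    intro v
    have hface : ∀ f ∈ faces,
        (edges.filter fun e => v ∈ e ∧ e ⊆ f).card = if v ∈ f then 2 else 0 := by
      intro f hf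
      have heq : edges.filter (fun e => v ∈ e ∧ e ⊆ f)
          = (f.powersetCard 2).filter (fun s => v ∈ s) := by
        ext e
        simp only [Finset.mem_filter, Finset.mem_powersetCard]
        constructor
        · rintro ⟨he, hv, hef⟩; exact ⟨⟨hef, hecard e he⟩, hv⟩
        · rintro ⟨⟨hef, hc⟩, hv⟩
          exact ⟨hsub f hf (Finset.mem_powersetCard.mpr ⟨hef, hc⟩), hv, hef⟩
      rw [heq]
      by_cases hvf : v ∈ f
      · rw [if_pos hvf]
        have hneg : (f.powersetCard 2).filter (fun s => ¬ v ∈ s)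
            = (f.erase v).powersetCard 2 := by
          ext s
          simp only [Finset.mem_filter, Finset.mem_powersetCard, Finset.subset_erase]
          tauto
        have htot := Finset.card_filter_add_card_filter_not
          (s := f.powersetCard 2) (p := fun s => v ∈ s)
        rw [hneg] at htot
        rw [Finset.card_powersetCard, Finset.card_powersetCard,
          Finset.card_erase_of_mem hvf, hcard f hf] at htot
        norm_num [Nat.choose] at htot
        omega
      · rw [if_neg hvf, Finset.card_eq_zero, Finset.filter_eq_empty_iff]
        intro s hs hvs
        exact hvf ((Finset.mem_powersetCard.mp hs).1 hvs)
    have key : ∑ e ∈ edges.filter (fun e => v ∈ e), (faces.filter fun f => e ⊆ f).card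
        = ∑ f ∈ faces, (edges.filter fun e => v ∈ e ∧ e ⊆ f).card := by
      simp only [Finset.card_filter]
      rw [Finset.sum_filter]
      rw [show (∑ f ∈ faces, ∑ e ∈ edges, if v ∈ e ∧ e ⊆ f then 1 else 0)
          = ∑ e ∈ edges, ∑ f ∈ faces, if v ∈ e ∧ e ⊆ f then 1 else 0 from Finset.sum_comm]
      refine Finset.sum_congr rfl fun e _ => ?_
      simp only [ite_and]
      split <;> simp
    have hL : ∑ e ∈ edges.filter (fun e => v ∈ e), (faces.filter fun f => e ⊆ f).card
        = 2 * deg v := by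
      rw [Finset.sum_congr rfl fun e he => htwo e (Finset.mem_filter.mp he).1,
        Finset.sum_const, smul_eq_mul, mul_comm]
    have hR : ∑ f ∈ faces, (edges.filter fun e => v ∈ e ∧ e ⊆ f).card
        = 2 * (faces.filter fun f => v ∈ f).card := by
      rw [Finset.sum_congr rfl hface, ← Finset.sum_filter, Finset.sum_const,
        smul_eq_mul, mul_comm]
    omega
  -- each face contains at most one low-degree vertex
  have hAface : ∀ f ∈ faces, (f.filter fun v => deg v ≤ 11).card ≤ 1 := by
    intro f hf
    rw [Finset.card_le_one]
    intro a ha b hb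
    by_contra hne
    simp only [Finset.mem_filter] at ha hb
    have hedge : ({a, b} : Finset V) ∈ edges := by
      apply hsub f hf
      rw [Finset.mem_powersetCard]
      refine ⟨?_, ?_⟩
      · intro x hx
        simp only [Finset.mem_insert, Finset.mem_singleton] at hx
        rcases hx with rfl | rfl
        exacts [ha.1, hb.1]
      · rw [Finset.card_insert_of_notMem (by simp [hne]), Finset.card_singleton]
    exact absurd hb.2 (not_le.mpr (hcon a b hedge ha.2))
  set A : Finset V := Finset.univ.filter (fun v => deg v ≤ 11) with hA
  -- sum of degrees over A is at most F
  have hsumA : ∑ v ∈ A, deg v ≤ faces.card := by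
    have h1 : ∑ v ∈ A, deg v = ∑ v ∈ A, (faces.filter fun f => v ∈ f).card :=
      Finset.sum_congr rfl fun v _ => (hfA v).symm
    have h2 : ∑ v ∈ A, (faces.filter fun f => v ∈ f).card
        = ∑ f ∈ faces, (A.filter fun v => v ∈ f).card := by
      simp only [Finset.card_filter]
      exact Finset.sum_comm
    have h3 : ∀ f ∈ faces, (A.filter fun v => v ∈ f).card ≤ 1 := by
      intro f hf
      refine le_trans (le_of_eq ?_) (hAface f hf)
      congr 1
      ext v
      simp only [hA, Finset.mem_filter, Finset.mem_univ, true_and]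
      tauto
    calc ∑ v ∈ A, deg v = ∑ f ∈ faces, (A.filter fun v => v ∈ f).card := by rw [h1, h2]
      _ ≤ ∑ f ∈ faces, 1 := Finset.sum_le_sum h3
      _ = faces.card := by simp
  -- low/high split
  have hsplit : ∑ v ∈ A, deg v + ∑ v ∈ Finset.univ.filter (fun v => ¬ deg v ≤ 11), deg v
      = 2 * edges.card := by
    rw [hA, Finset.sum_filter_add_sum_filter_not, hhand]
  have hcardsplit : A.card + (Finset.univ.filter (fun v => ¬ deg v ≤ 11)).card
      = Fintype.card V := by
    rw [hA, Finset.card_filter_add_card_filter_not, Finset.card_univ]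
  have hBlow : 12 * (Finset.univ.filter (fun v => ¬ deg v ≤ 11)).card
      ≤ ∑ v ∈ Finset.univ.filter (fun v => ¬ deg v ≤ 11), deg v := by
    have h := Finset.card_nsmul_le_sum (Finset.univ.filter (fun v => ¬ deg v ≤ 11)) deg 12
      (fun v hv => by have := (Finset.mem_filter.mp hv).2; omega)
    simpa [smul_eq_mul, mul_comm] using h
  have hAlow : 3 * A.card ≤ ∑ v ∈ A, deg v := by
    have h := Finset.card_nsmul_le_sum A deg 3 (fun v _ => hdeg v)
    simpa [smul_eq_mul, mul_comm] using h
  omega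
end

section
/- If X is an r-ample simplicial complex, then every simplicial complex on at most r+1 vertices embeds into X as an induced subcomplex. -/
/-- An abstract simplicial complex on a vertex type `V`: a family of nonempty finite
subsets of `V` (the simplices), closed under passing to nonempty subsets. -/
structure SimplicialComplex (V : Type*) where
  faces : Set (Finset V)
  not_empty_mem : ∅ ∉ faces
  down_closed : ∀ s ∈ faces, ∀ t ⊆ s, t ≠ ∅ → t ∈ faces

namespace SimplicialComplex

variable {V : Type*}

/-- The vertex set of a simplicial complex. -/
def vertexSet (X : SimplicialComplex V) : Set V := {v | ({v} : Finset V) ∈ X.faces}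

/-- The simplices of the induced subcomplex `X_U` on a set of vertices `U`. -/
def inducedFaces (X : SimplicialComplex V) (U : Set V) : Set (Finset V) :=
  {s | s ∈ X.faces ∧ ↑s ⊆ U}

/-- `A` is (the set of simplices of) a subcomplex of the induced subcomplex `X_U`. -/
def IsSubcomplexOfInduced (X : SimplicialComplex V) (U : Set V) (A : Set (Finset V)) : Prop :=
  A ⊆ X.inducedFaces U ∧ ∀ s ∈ A, ∀ t ⊆ s, t ≠ ∅ → t ∈ A

/-- The simplices of the link of a vertex `v`: simplices `s` not containing `v`
with `s ∪ {v}` a simplex of `X`. -/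
def linkFaces [DecidableEq V] (X : SimplicialComplex V) (v : V) : Set (Finset V) :=
  {s | v ∉ s ∧ s ≠ ∅ ∧ insert v s ∈ X.faces}

/-- The link of a vertex, as a simplicial complex. -/
def link [DecidableEq V] (X : SimplicialComplex V) (v : V) : SimplicialComplex V where
  faces := X.linkFaces v
  not_empty_mem := fun h => h.2.1 rfl
  down_closed := by
    rintro s ⟨hv, -, hs⟩ t hts ht
    exact ⟨fun h => hv (hts h), ht,
      X.down_closed _ hs _ (Finset.insert_subset_insert v hts) (by simp)⟩

/-- `X` is `r`-ample: `X` is nonempty and for every set `U` of at most `r` vertices of `X`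
and every subcomplex `A ⊆ X_U` there is a vertex `v ∉ U` with `lk_X(v) ∩ X_U = A`. -/
def IsAmple [DecidableEq V] (X : SimplicialComplex V) (r : ℕ) : Prop :=
  X.faces.Nonempty ∧
  ∀ U : Finset V, ↑U ⊆ X.vertexSet → U.card ≤ r →
    ∀ A : Set (Finset V), X.IsSubcomplexOfInduced ↑U A →
      ∃ v ∈ X.vertexSet, v ∉ U ∧ X.linkFaces v ∩ X.inducedFaces ↑U = A

/-- An embedding of a simplicial complex `A` into `X`: an injection of the vertices of `A`
which identifies `A` with the induced subcomplex of `X` on the image. -/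
def IsEmbedding {W : Type*} [DecidableEq W] (A : SimplicialComplex V)
    (X : SimplicialComplex W) (f : V → W) : Prop :=
  Set.InjOn f A.vertexSet ∧
  ∀ s : Finset V, ↑s ⊆ A.vertexSet → s.Nonempty → (s ∈ A.faces ↔ s.image f ∈ X.faces)

end SimplicialComplex

open SimplicialComplex in
/-- **Any simplicial complex on at most `r+1` vertices embeds into an `r`-ample complex
as an induced subcomplex.** -/
theorem embeds_into_ample {V W : Type*} [DecidableEq W]
    (X : SimplicialComplex W) (r : ℕ) (hX : X.IsAmple r)
    (A : SimplicialComplex V) (hfin : A.vertexSet.Finite)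
    (hcard : A.vertexSet.ncard ≤ r + 1) :
    ∃ f : V → W, A.IsEmbedding X f := by
  classical
  obtain ⟨⟨s₀, hs₀⟩, hamp⟩ := hX
  have hs₀ne : s₀.Nonempty :=
    Finset.nonempty_iff_ne_empty.mpr (fun h => X.not_empty_mem (h ▸ hs₀))
  obtain ⟨w₀, hw₀⟩ := hs₀ne
  have hw₀v : w₀ ∈ X.vertexSet :=
    X.down_closed _ hs₀ {w₀} (Finset.singleton_subset_iff.mpr hw₀) (by simp)
  have key : ∀ S : Finset V, ↑S ⊆ A.vertexSet → S.card ≤ r + 1 →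
      ∃ g : V → W, Set.InjOn g ↑S ∧ (∀ x ∈ S, g x ∈ X.vertexSet) ∧
        ∀ s : Finset V, ↑s ⊆ (↑S : Set V) → s.Nonempty →
          (s ∈ A.faces ↔ s.image g ∈ X.faces) := by
    intro S
    induction S using Finset.induction_on with
    | empty =>
      intro _ _
      refine ⟨fun _ => w₀, by simp, by simp, ?_⟩
      intro s hs hne
      exact absurd (Finset.coe_eq_empty.mp (Set.subset_empty_iff.mp (by simpa using hs)))
        hne.ne_empty
    | @insert a S ha IH =>
      intro hsub hcard'
      have hSsub : ↑S ⊆ A.vertexSet := fun x hx => hsub (by simp [hx])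
      have haA : a ∈ A.vertexSet := hsub (by simp)
      have hScard : S.card ≤ r := by
        have := Finset.card_insert_of_notMem ha; omega
      obtain ⟨g, hginj, hgvert, hgfaces⟩ := IH hSsub (by omega)
      set U : Finset W := S.image g with hU
      have hUsub : ↑U ⊆ X.vertexSet := by
        intro w hw
        simp only [hU, Finset.coe_image, Set.mem_image, Finset.mem_coe] at hw
        obtain ⟨x, hx, rfl⟩ := hw
        exact hgvert x hx
      have hUcard : U.card ≤ r := le_trans Finset.card_image_le hScard
      set A' : Set (Finset W) :=
        {t | ∃ s : Finset V, ↑s ⊆ (↑S : Set V) ∧ s.Nonempty ∧ insert a s ∈ A.faces ∧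
          t = s.image g} with hA'
      -- image equality under injectivity
      have himg_eq : ∀ s t : Finset V, ↑s ⊆ (↑S : Set V) → ↑t ⊆ (↑S : Set V) →
          s.image g = t.image g → s = t := by
        intro s t hs ht h
        have : (↑(s.image g) : Set W) = ↑(t.image g) := by rw [h]
        rw [Finset.coe_image, Finset.coe_image] at this
        exact Finset.coe_injective
          ((hginj.image_eq_image_iff hs ht).mp this)
      have hA'sub : X.IsSubcomplexOfInduced ↑U A' := by
        constructor
        · rintro t ⟨s, hsS, hsne, hins, rfl⟩
          have hsA : s ∈ A.faces :=
            A.down_closed _ hins s (Finset.subset_insert a s) hsne.ne_empty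
          refine ⟨(hgfaces s hsS hsne).mp hsA, ?_⟩
          intro w hw
          simp only [Finset.coe_image, Set.mem_image, Finset.mem_coe] at hw
          obtain ⟨x, hx, rfl⟩ := hw
          exact Finset.mem_coe.mpr (Finset.mem_image_of_mem g (Finset.mem_coe.mp (hsS hx)))
        · rintro t ⟨s, hsS, hsne, hins, rfl⟩ t' ht' hne
          obtain ⟨s', hs'sub, rfl⟩ := Finset.subset_image_iff.mp ht'
          have hs'ne : s'.Nonempty := by
            by_contra h
            rw [Finset.not_nonempty_iff_eq_empty.mp h, Finset.image_empty] at hne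
            exact hne rfl
          refine ⟨s', fun x hx => hsS (hs'sub (by exact_mod_cast hx)), hs'ne, ?_, rfl⟩
          exact A.down_closed _ hins _
            (Finset.insert_subset_insert a hs'sub)
            (Finset.insert_nonempty a s').ne_empty
      obtain ⟨w, hwv, hwU, hlink⟩ := hamp U hUsub hUcard A' hA'sub
      have hwne : ∀ x ∈ S, g x ≠ w := by
        intro x hx h
        exact hwU (h ▸ Finset.mem_image_of_mem g hx)
      set g' : V → W := Function.update g a w with hg'
      have hg'agree : ∀ x ∈ S, g' x = g x := by
        intro x hx
        have hxa : x ≠ a := by rintro rfl; exact ha hx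
        exact Function.update_of_ne hxa _ _
      have hg'a : g' a = w := Function.update_self a w g
      have himg : ∀ s : Finset V, ↑s ⊆ (↑S : Set V) → s.image g' = s.image g := by
        intro s hs
        apply Finset.image_congr
        intro x hx
        exact hg'agree x (hs hx)
      refine ⟨g', ?_, ?_, ?_⟩
      · -- injectivity
        intro x hx y hy hxy
        simp only [Finset.coe_insert, Set.mem_insert_iff, Finset.mem_coe] at hx hy
        rcases hx with rfl | hx <;> rcases hy with rfl | hy
        · rfl
        · rw [hg'a, hg'agree y hy] at hxy
          exact absurd hxy.symm (hwne y hy)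
        · rw [hg'a, hg'agree x hx] at hxy
          exact absurd hxy (hwne x hx)
        · rw [hg'agree x hx, hg'agree y hy] at hxy
          exact hginj hx hy hxy
      · intro x hx
        rcases Finset.mem_insert.mp hx with rfl | hx
        · rw [hg'a]; exact hwv
        · rw [hg'agree x hx]; exact hgvert x hx
      · intro s hs hsne
        by_cases has : a ∈ s
        · -- s contains a
          set s₀ : Finset V := s.erase a with hs₀def
          have hs₀S : ↑s₀ ⊆ (↑S : Set V) := by
            intro x hx
            simp only [hs₀def, Finset.coe_erase, Set.mem_diff, Finset.mem_coe,
              Set.mem_singleton_iff] at hx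
            have := hs hx.1
            simp only [Finset.coe_insert, Set.mem_insert_iff, Finset.mem_coe] at this
            rcases this with rfl | h
            · exact absurd rfl hx.2
            · exact h
          have hseq : s = insert a s₀ := (Finset.insert_erase has).symm
          have has₀ : a ∉ s₀ := Finset.notMem_erase a s
          have himg' : s.image g' = insert w (s₀.image g) := by
            rw [hseq, Finset.image_insert, hg'a, himg s₀ hs₀S]
          by_cases hs₀ne : s₀.Nonempty
          · set t : Finset W := s₀.image g with ht
            have htne : t ≠ ∅ := (hs₀ne.image g).ne_empty
            have hwt : w ∉ t := by
              intro h
              simp only [ht, Finset.mem_image] at h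
              obtain ⟨x, hx, hxe⟩ := h
              exact hwne x (by exact_mod_cast hs₀S hx) hxe
            have htU : ↑t ⊆ (↑U : Set W) := by
              intro y hy
              simp only [ht, Finset.coe_image, Set.mem_image, Finset.mem_coe] at hy
              obtain ⟨x, hx, rfl⟩ := hy
              exact_mod_cast Finset.mem_image_of_mem g (by exact_mod_cast hs₀S hx)
            constructor
            · intro hsA
              -- t ∈ A', hence in link, hence insert w t ∈ X.faces
              have htA' : t ∈ A' := ⟨s₀, hs₀S, hs₀ne, hseq ▸ hsA, rfl⟩
              have := hlink ▸ htA'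
              rw [himg']
              exact this.1.2.2
            · intro hXf
              rw [himg'] at hXf
              have htlk : t ∈ X.linkFaces w := ⟨hwt, htne, hXf⟩
              have htind : t ∈ X.inducedFaces ↑U :=
                ⟨X.down_closed _ hXf t (Finset.subset_insert w t) htne, htU⟩
              have htA' : t ∈ A' := hlink ▸ Set.mem_inter htlk htind
              obtain ⟨s', hs'S, hs'ne, hins', heq⟩ := htA'
              have : s' = s₀ := himg_eq s' s₀ hs'S hs₀S heq.symm
              rw [hseq, ← this]
              exact hins'
          · -- s = {a}
            have : s₀ = ∅ := Finset.not_nonempty_iff_eq_empty.mp hs₀ne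
            have hsa : s = {a} := by rw [hseq, this]; rfl
            constructor
            · intro _
              rw [hsa, Finset.image_singleton, hg'a]
              exact hwv
            · intro _
              rw [hsa]
              exact haA
        · -- a ∉ s, so s ⊆ S
          have hsS : ↑s ⊆ (↑S : Set V) := by
            intro x hx
            have := hs hx
            simp only [Finset.coe_insert, Set.mem_insert_iff, Finset.mem_coe] at this
            rcases this with rfl | h
            · exact absurd hx has
            · exact h
          rw [himg s hsS]
          exact hgfaces s hsS hsne
  obtain ⟨g, hinj, _, hfaces⟩ := key hfin.toFinset (by simp)
    (by rw [← Set.ncard_eq_toFinset_card _ hfin]; exact hcard)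
  exact ⟨g, by simpa using hinj, fun s hsub hne => hfaces s (by simpa using hsub) hne⟩
end

section
/- The link of a vertex in an r-ample simplicial complex is (r-1)-ample. -/
open SimplicialComplex in
/-- **The link of a vertex in an `r`-ample simplicial complex is `(r-1)`-ample.** -/
theorem link_isAmple {V : Type*} [DecidableEq V]
    (X : SimplicialComplex V) (r : ℕ) (hr : 1 ≤ r) (hX : X.IsAmple r)
    (v : V) (hv : v ∈ X.vertexSet) :
    (X.link v).IsAmple (r - 1) := by
  obtain ⟨-, hamp⟩ := hX
  set Y := X.link v with hY
  have key : ∀ U : Finset V, ↑U ⊆ Y.vertexSet → U.card ≤ r - 1 →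
      ∀ A : Set (Finset V), Y.IsSubcomplexOfInduced ↑U A →
      ∃ w ∈ Y.vertexSet, w ∉ U ∧
        Y.linkFaces w ∩ Y.inducedFaces ↑U = A := by
    intro U hU hcard A hA
    have hvU : v ∉ U := by
      intro h
      have : ({v} : Finset V) ∈ Y.faces := hU h
      exact this.1 (Finset.mem_singleton_self v)
    have hUX : ↑U ⊆ X.vertexSet := by
      intro u hu
      have h1 : ({u} : Finset V) ∈ Y.faces := hU hu
      exact X.down_closed _ h1.2.2 {u} (by simp) (by simp)
    have hAne : (∅ : Finset V) ∉ A := by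
      intro h
      exact Y.not_empty_mem (hA.1 h).1
    -- the join of A with v
    set A' : Set (Finset V) := {t | t = {v} ∨ t.erase v ∈ A} with hA'
    have hsub : X.IsSubcomplexOfInduced ↑(insert v U) A' := by
      constructor
      · rintro t (rfl | ht)
        · exact ⟨hv, by simp⟩
        · obtain ⟨hf, hsubU⟩ := hA.1 ht
          obtain ⟨hvne, hne, hins⟩ := hf
          have htsub : t ⊆ insert v (t.erase v) := by
            intro x hx
            by_cases hxv : x = v
            · simp [hxv]
            · exact Finset.mem_insert_of_mem (Finset.mem_erase.2 ⟨hxv, hx⟩)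
          have htne : t ≠ ∅ := by
            intro h
            exact hne (by simp [h])
          refine ⟨X.down_closed _ hins _ htsub htne, ?_⟩
          intro x hx
          by_cases hxv : x = v
          · simp [hxv]
          · have : x ∈ t.erase v := Finset.mem_erase.2 ⟨hxv, hx⟩
            simpa using Or.inr (hsubU this)
      · rintro s (rfl | hs) t hts htne
        · left
          exact Finset.eq_of_subset_of_card_le hts
            (by simpa using Finset.card_pos.2 (Finset.nonempty_iff_ne_empty.2 htne))
        · by_cases h : t.erase v = ∅
          · left
            have : t ⊆ {v} := by
              intro x hx
              by_contra hxv
              exact absurd (Finset.mem_erase.2 ⟨by simpa using hxv, hx⟩) (by simp [h])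
            rcases Finset.subset_singleton_iff.1 this with h' | h'
            · exact absurd h' htne
            · exact h'
          · right
            exact hA.2 _ hs _ (Finset.erase_subset_erase v hts) h
    have hcard' : (insert v U).card ≤ r := by
      calc (insert v U).card ≤ U.card + 1 := Finset.card_insert_le v U
        _ ≤ (r - 1) + 1 := by omega
        _ ≤ r := by omega
    have hU'X : ↑(insert v U) ⊆ X.vertexSet := by
      intro x hx
      rcases Finset.mem_insert.1 (by simpa using hx) with rfl | hx
      · exact hv
      · exact hUX hx
    obtain ⟨w, hwX, hwU', heq⟩ := hamp (insert v U) hU'X hcard' A' hsub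
    have hwv : w ≠ v := fun h => hwU' (by simp [h])
    have hwU : w ∉ U := fun h => hwU' (Finset.mem_insert_of_mem h)
    have hvlk : ({v} : Finset V) ∈ X.linkFaces w ∩ X.inducedFaces ↑(insert v U) := by
      rw [heq]; exact Or.inl rfl
    have hwY : w ∈ Y.vertexSet := by
      refine ⟨by simp [Ne.symm hwv], by simp, ?_⟩
      have := hvlk.1.2.2
      rwa [Finset.pair_comm w v] at this
    refine ⟨w, hwY, hwU, ?_⟩
    ext s
    constructor
    · rintro ⟨⟨hws, hsne, hYins⟩, hsY, hsU⟩
      obtain ⟨hv1, -, h2⟩ := hYins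
      have hvs : v ∉ s := fun h => hv1 (Finset.mem_insert_of_mem h)
      have hins : insert v s ∈ X.linkFaces w ∩ X.inducedFaces ↑(insert v U) := by
        refine ⟨⟨?_, by simp, ?_⟩, ?_, ?_⟩
        · intro h
          rcases Finset.mem_insert.1 h with h | h
          · exact hwv h
          · exact hws h
        · rwa [Finset.insert_comm]
        · exact X.down_closed _ (by rwa [Finset.insert_comm] at h2) _
            (Finset.subset_insert w _) (by simp)
        · intro x hx
          rcases Finset.mem_insert.1 (by simpa using hx) with rfl | hx
          · simp
          · simpa using Or.inr (hsU hx)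
      rw [heq] at hins
      rcases hins with h | h
      · exfalso
        have : s ⊆ {v} := by rw [← h]; exact Finset.subset_insert v s
        rcases Finset.subset_singleton_iff.1 this with h' | h'
        · exact hsne h'
        · exact hvs (h' ▸ Finset.mem_singleton_self v)
      · rwa [Finset.erase_insert hvs] at h
    · intro hs
      obtain ⟨hsY, hsU⟩ := hA.1 hs
      obtain ⟨hvs, hsne, hvins⟩ := hsY
      have hins : insert v s ∈ A' := Or.inr (by rwa [Finset.erase_insert hvs])
      rw [← heq] at hins
      obtain ⟨⟨hws', -, h2⟩, -⟩ := hins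
      have hws : w ∉ s := fun h => hws' (Finset.mem_insert_of_mem h)
      refine ⟨⟨hws, hsne, ?_, by simp, ?_⟩, ⟨hvs, hsne, hvins⟩, hsU⟩
      · intro h
        rcases Finset.mem_insert.1 h with h | h
        · exact hwv h.symm
        · exact hvs h
      · rwa [Finset.insert_comm] at h2
  refine ⟨?_, key⟩
  obtain ⟨w, hw, -, -⟩ := key ∅ (by simp) (by simp) ∅ ⟨Set.empty_subset _, by simp⟩
  exact ⟨{w}, hw⟩
end

section
/- The link of every k-dimensional simplex in an r-ample simplicial complex is (r-k-1)-ample. -/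
namespace SimplicialComplex

/-- The link of a simplex `σ` in `X`: the complex of simplices `τ` disjoint from `σ`
with `τ ∪ σ` a simplex of `X`. -/
def linkOf {V : Type*} [DecidableEq V] (X : SimplicialComplex V) (σ : Finset V) :
    SimplicialComplex V where
  faces := {s | Disjoint s σ ∧ s ≠ ∅ ∧ s ∪ σ ∈ X.faces}
  not_empty_mem := fun h => h.2.1 rfl
  down_closed := by
    rintro s ⟨hd, -, hs⟩ t hts ht
    refine ⟨Finset.disjoint_of_subset_left hts hd, ht, ?_⟩
    exact X.down_closed _ hs _ (Finset.union_subset_union_left hts)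
      fun h => ht (Finset.union_eq_empty.mp h).1

end SimplicialComplex

open SimplicialComplex in
/-- **The link of every `k`-dimensional simplex in an `r`-ample simplicial complex is
`(r-k-1)`-ample.** -/
theorem linkOf_isAmple {V : Type*} [DecidableEq V]
    (X : SimplicialComplex V) (r k : ℕ) (hX : X.IsAmple r)
    (σ : Finset V) (hσ : σ ∈ X.faces) (hcard : σ.card = k + 1) (hk : k + 1 ≤ r) :
    (X.linkOf σ).IsAmple (r - k - 1) := by
  obtain ⟨hne, hamp⟩ := hX
  have hσv : ↑σ ⊆ X.vertexSet := fun x hx =>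
    X.down_closed σ hσ {x} (by simpa using hx) (by simp)
  constructor
  · -- nonemptiness of the link
    obtain ⟨v, hv, hvσ, heq⟩ := hamp σ hσv (by omega) (X.inducedFaces ↑σ)
      ⟨subset_rfl, fun s hs t ht htne =>
        ⟨X.down_closed s hs.1 t ht htne, (Finset.coe_subset.mpr ht).trans hs.2⟩⟩
    have hσmem : σ ∈ X.linkFaces v ∩ X.inducedFaces ↑σ := by
      rw [heq]; exact ⟨hσ, subset_rfl⟩
    refine ⟨{v}, Finset.disjoint_singleton_left.mpr hvσ, by simp, ?_⟩
    rw [← Finset.insert_eq]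
    exact hσmem.1.2.2
  · rintro U hU hUcard A ⟨hA1, hA2⟩
    have hAfact : ∀ s ∈ A, Disjoint s σ ∧ s ≠ ∅ ∧ s ∪ σ ∈ X.faces ∧ ↑s ⊆ (↑U : Set V) :=
      fun s hs => ⟨(hA1 hs).1.1, (hA1 hs).1.2.1, (hA1 hs).1.2.2, (hA1 hs).2⟩
    set U' : Finset V := U ∪ σ with hU'
    have hU'v : ↑U' ⊆ X.vertexSet := by
      rw [hU', Finset.coe_union]
      rintro x (hx | hx)
      · exact X.down_closed _ (hU hx).2.2 {x} Finset.subset_union_left (by simp)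
      · exact hσv hx
    have hU'card : U'.card ≤ r := by
      show (U ∪ σ).card ≤ r
      have := Finset.card_union_le U σ
      omega
    set A' : Set (Finset V) := {s | s ∈ X.inducedFaces ↑U' ∧ (s \ σ = ∅ ∨ s \ σ ∈ A)}
      with hA'def
    have hA' : X.IsSubcomplexOfInduced ↑U' A' := by
      constructor
      · exact fun s hs => hs.1
      · rintro s ⟨⟨hsX, hsU⟩, hsd⟩ t ht htne
        refine ⟨⟨X.down_closed s hsX t ht htne, (Finset.coe_subset.mpr ht).trans hsU⟩, ?_⟩
        rcases Finset.eq_empty_or_nonempty (t \ σ) with h | h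
        · exact Or.inl h
        · rcases hsd with h' | h'
          · exact absurd (Finset.subset_empty.mp
              (h' ▸ Finset.sdiff_subset_sdiff ht subset_rfl)) h.ne_empty
          · exact Or.inr (hA2 _ h' _ (Finset.sdiff_subset_sdiff ht subset_rfl) h.ne_empty)
    obtain ⟨v, hv, hvU', heq⟩ := hamp U' hU'v hU'card A' hA'
    have hvσ : v ∉ σ := fun h => hvU' (Finset.mem_union_right _ h)
    have hvU : v ∉ U := fun h => hvU' (Finset.mem_union_left _ h)
    have hσA' : σ ∈ A' :=
      ⟨⟨hσ, by rw [hU', Finset.coe_union]; exact Set.subset_union_right⟩,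
        Or.inl (Finset.sdiff_self σ)⟩
    have hσlk : insert v σ ∈ X.faces := by
      rw [← heq] at hσA'
      exact hσA'.1.2.2
    refine ⟨v, ⟨Finset.disjoint_singleton_left.mpr hvσ, by simp,
      by rw [← Finset.insert_eq]; exact hσlk⟩, hvU, ?_⟩
    ext s
    constructor
    · rintro ⟨⟨hvs, hsne, hdis, -, hX'⟩, ⟨hds, -, hsσ⟩, hsU⟩
      have ht : s ∪ σ ∈ X.linkFaces v ∩ X.inducedFaces ↑U' := by
        refine ⟨⟨by simp [hvs, hvσ], fun h => hsne (Finset.union_eq_empty.mp h).1, ?_⟩,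
          hsσ, ?_⟩
        · rwa [Finset.insert_union] at hX'
        · rw [hU', Finset.coe_union, Finset.coe_union]
          exact Set.union_subset_union hsU subset_rfl
      rw [heq] at ht
      have hsd : (s ∪ σ) \ σ = s := by
        rw [Finset.union_sdiff_right, Finset.sdiff_eq_self_of_disjoint hds]
      rcases ht.2 with h | h
      · exact absurd (hsd ▸ h) hsne
      · rwa [hsd] at h
    · intro hs
      obtain ⟨hds, hsne, hsσ, hsU⟩ := hAfact s hs
      have hvs : v ∉ s := fun h => hvU (hsU h)
      have hsA' : s ∪ σ ∈ A' := by
        refine ⟨⟨hsσ, ?_⟩, Or.inr ?_⟩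
        · rw [hU', Finset.coe_union, Finset.coe_union]
          exact Set.union_subset_union hsU subset_rfl
        · rw [Finset.union_sdiff_right, Finset.sdiff_eq_self_of_disjoint hds]
          exact hs
      rw [← heq] at hsA'
      refine ⟨⟨hvs, hsne, ?_, by simp [hsne], ?_⟩, ⟨hds, hsne, hsσ⟩, hsU⟩
      · simp [Finset.disjoint_insert_left, hvσ, hds]
      · rw [Finset.insert_union]
        exact hsA'.1.2.2
end

section
/- Any simplicial map f: K → X from a simplicial complex K with at most r vertices into an r-ample simplicial complex X is null-homotopic; in fact f factors through a cone v * X_U for some vertex v, where U = f(V(K)). -/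
open SimplicialComplex in
/-- **Any simplicial map from a complex with at most `r` vertices into an `r`-ample complex
is null-homotopic**: it factors through a cone `v * X_U` where `U = f(V(K))`.  Combinatorially,
there is a vertex `v ∉ U` such that adjoining `v` to the image of any simplex of `K`
yields a simplex of `X` (so the image lies in the contractible cone `v * X_U`). -/
theorem simplicial_map_factors_through_cone {V W : Type*} [DecidableEq W]
    (X : SimplicialComplex W) (r : ℕ) (hX : X.IsAmple r)
    (K : SimplicialComplex V) (hfin : K.vertexSet.Finite) (hcard : K.vertexSet.ncard ≤ r)
    (f : V → W) (hf : ∀ s ∈ K.faces, s.image f ∈ X.faces) :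
    ∃ v ∈ X.vertexSet, v ∉ f '' K.vertexSet ∧
      ∀ s ∈ K.faces, insert v (s.image f) ∈ X.faces := by
  classical
  set U : Finset W := hfin.toFinset.image f with hU
  have hUcoe : (↑U : Set W) = f '' K.vertexSet := by
    simp [hU, Set.Finite.coe_toFinset]
  -- simplices of K have vertices in K.vertexSet
  have hvert : ∀ s ∈ K.faces, (↑s : Set V) ⊆ K.vertexSet := by
    intro s hs x hx
    exact K.down_closed s hs {x} (by simpa using hx) (by simp)
  have hUsub : (↑U : Set W) ⊆ X.vertexSet := by
    rw [hUcoe]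
    rintro w ⟨u, hu, rfl⟩
    have : ({u} : Finset V) ∈ K.faces := hu
    exact (by simpa using hf _ this : ({f u} : Finset W) ∈ X.faces)
  have hUcard : U.card ≤ r := by
    calc U.card ≤ hfin.toFinset.card := Finset.card_image_le
    _ = K.vertexSet.ncard := (Set.ncard_eq_toFinset_card _ hfin).symm
    _ ≤ r := hcard
  have hA : X.IsSubcomplexOfInduced ↑U (X.inducedFaces ↑U) := by
    refine ⟨subset_rfl, ?_⟩
    rintro s ⟨hs, hsU⟩ t hts ht
    exact ⟨X.down_closed s hs t hts ht, (Finset.coe_subset.2 hts).trans hsU⟩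
  obtain ⟨v, hvX, hvU, hlink⟩ := hX.2 U hUsub hUcard _ hA
  refine ⟨v, hvX, by rwa [← hUcoe], ?_⟩
  intro s hs
  have hmem : s.image f ∈ X.inducedFaces ↑U := by
    refine ⟨hf s hs, ?_⟩
    rw [hUcoe]
    rintro w hw
    simp only [Finset.coe_image, Set.mem_image] at hw
    obtain ⟨x, hx, rfl⟩ := hw
    exact ⟨x, hvert s hs hx, rfl⟩
  have : s.image f ∈ X.linkFaces v ∩ X.inducedFaces ↑U := by
    rw [hlink]; exact hmem
  exact this.1.2.2
end

section
/- Let X be an r-ample simplicial complex and let Y be obtained from X by removing a finite set F of simplexes (together with all simplexes having a face in F). If |F| + Σ_{σ∈F} dim(σ) < M'(k) + k, then Y is (r-k)-ample. -/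
/-- `M'(k)`: the number of simplicial complexes with vertex set contained in `{1, …, k}`. -/
noncomputable def numComplexes (k : ℕ) : ℕ :=
  Set.ncard {F : Finset (Finset (Fin k)) |
    ∅ ∉ F ∧ ∀ s ∈ F, ∀ t ⊆ s, t ≠ ∅ → t ∈ F}

namespace SimplicialComplex

/-- The complex obtained from `X` by removing a set `F` of simplices together with
all simplices having a face in `F`. -/
def removeFaces {V : Type*} (X : SimplicialComplex V) (F : Finset (Finset V)) :
    SimplicialComplex V where
  faces := {s | s ∈ X.faces ∧ ∀ t ∈ F, ¬ t ⊆ s}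
  not_empty_mem := fun h => X.not_empty_mem h.1
  down_closed := fun s hs t hts ht =>
    ⟨X.down_closed s hs.1 t hts ht, fun u hu hut => hs.2 u hu (hut.trans hts)⟩

end SimplicialComplex


set_option linter.unusedSectionVars false

namespace SimplicialComplex

variable {V : Type*} [DecidableEq V]

lemma face_ne_empty (X : SimplicialComplex V) {s : Finset V} (h : s ∈ X.faces) : s ≠ ∅ :=
  fun hs => X.not_empty_mem (hs ▸ h)

lemma mem_A_subset {X : SimplicialComplex V} {U : Finset V} {A : Set (Finset V)}
    (hA : X.IsSubcomplexOfInduced ↑U A) {a : Finset V} (ha : a ∈ A) : a ⊆ U :=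
  Finset.coe_subset.mp (hA.1 ha).2

lemma mem_A_face {X : SimplicialComplex V} {U : Finset V} {A : Set (Finset V)}
    (hA : X.IsSubcomplexOfInduced ↑U A) {a : Finset V} (ha : a ∈ A) : a ∈ X.faces :=
  (hA.1 ha).1

/-- The join of a complex `A` over `U` with a complex `C` on `W`. -/
def joinF (A C : Set (Finset V)) (W : Finset V) : Set (Finset V) :=
  {s | s ≠ ∅ ∧ (s \ W = ∅ ∨ s \ W ∈ A) ∧ (s ∩ W = ∅ ∨ s ∩ W ∈ C)}

lemma joinF_subcomplex (X : SimplicialComplex V) {U W : Finset V} {A C : Set (Finset V)}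
    (hA : X.IsSubcomplexOfInduced ↑U A) (_hWU : ∀ w ∈ W, w ∉ U)
    (rich : ∀ a c : Finset V, (a ∈ A ∨ a = ∅) → c ⊆ W → a ∪ c ≠ ∅ → a ∪ c ∈ X.faces)
    (_hC1 : ∀ c ∈ C, c ⊆ W) (hC3 : ∀ c ∈ C, ∀ t ⊆ c, t ≠ ∅ → t ∈ C) :
    X.IsSubcomplexOfInduced ↑(U ∪ W) (joinF A C W) := by
  constructor
  · rintro s ⟨hne, h1, h2⟩
    have hdecomp : s \ W ∪ s ∩ W = s := Finset.sdiff_union_inter s W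
    have hface : s ∈ X.faces := by
      have := rich (s \ W) (s ∩ W) ?_ Finset.inter_subset_right ?_
      · rwa [hdecomp] at this
      · rcases h1 with h | h
        · exact Or.inr h
        · exact Or.inl h
      · rwa [hdecomp]
    refine ⟨hface, ?_⟩
    intro x hx
    rw [Finset.coe_union]
    by_cases hxW : x ∈ W
    · exact Or.inr hxW
    · have hxd : x ∈ s \ W := Finset.mem_sdiff.mpr ⟨hx, hxW⟩
      rcases h1 with h | h
      · rw [h] at hxd; exact absurd hxd (Finset.notMem_empty x)
      · exact Or.inl ((hA.1 h).2 hxd)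
  · rintro s ⟨_hne, h1, h2⟩ t hts htne
    refine ⟨htne, ?_, ?_⟩
    · rcases h1 with h | h
      · exact Or.inl (Finset.subset_empty.mp
          (h ▸ Finset.sdiff_subset_sdiff hts Finset.Subset.rfl))
      · by_cases h' : t \ W = ∅
        · exact Or.inl h'
        · exact Or.inr (hA.2 _ h _ (Finset.sdiff_subset_sdiff hts Finset.Subset.rfl) h')
    · rcases h2 with h | h
      · exact Or.inl (Finset.subset_empty.mp
          (h ▸ Finset.inter_subset_inter hts Finset.Subset.rfl))
      · by_cases h' : t ∩ W = ∅
        · exact Or.inl h'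
        · exact Or.inr (hC3 _ h _ (Finset.inter_subset_inter hts Finset.Subset.rfl) h')

lemma mem_C_iff_joinF {A C : Set (Finset V)} {W : Finset V}
    (hC1 : ∀ c ∈ C, c ⊆ W) (hC2 : ∅ ∉ C) (c : Finset V) :
    c ∈ C ↔ c ∈ joinF A C W ∧ c ⊆ W := by
  constructor
  · intro hc
    have hcW := hC1 c hc
    have hne : c ≠ ∅ := fun h => hC2 (h ▸ hc)
    exact ⟨⟨hne, Or.inl (Finset.sdiff_eq_empty_iff_subset.mpr hcW),
      Or.inr (by rwa [Finset.inter_eq_left.mpr hcW])⟩, hcW⟩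
  · rintro ⟨⟨hne, _, h3⟩, hcW⟩
    rw [Finset.inter_eq_left.mpr hcW] at h3
    rcases h3 with h | h
    · exact absurd h hne
    · exact h

lemma link_restrict (X : SimplicialComplex V) {U W : Finset V} {A C : Set (Finset V)} {v : V}
    (hA : X.IsSubcomplexOfInduced ↑U A) (hWU : ∀ w ∈ W, w ∉ U)
    (h : X.linkFaces v ∩ X.inducedFaces ↑(U ∪ W) = joinF A C W) :
    X.linkFaces v ∩ X.inducedFaces ↑U = A := by
  ext s
  constructor
  · rintro ⟨hl, hf, hsU⟩
    have hsU' : s ⊆ U := Finset.coe_subset.mp hsU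
    have hs' : s ∈ joinF A C W := by
      rw [← h]
      exact ⟨hl, hf, hsU.trans (by rw [Finset.coe_union]; exact Set.subset_union_left)⟩
    have hdisj : s \ W = s := by
      rw [Finset.sdiff_eq_self_iff_disjoint]
      exact Finset.disjoint_left.mpr fun x hx hxW => hWU x hxW (hsU' hx)
    rcases hs'.2.1 with h' | h'
    · rw [hdisj] at h'; exact absurd h' (X.face_ne_empty hf)
    · rwa [hdisj] at h'
  · intro ha
    have haU : s ⊆ U := mem_A_subset hA ha
    have hdisjW : Disjoint s W := Finset.disjoint_left.mpr fun x hx hxW => hWU x hxW (haU hx)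
    have h1 : s ∈ joinF A C W := by
      refine ⟨X.face_ne_empty (mem_A_face hA ha), Or.inr ?_, Or.inl ?_⟩
      · rwa [Finset.sdiff_eq_self_iff_disjoint.mpr hdisjW]
      · rwa [← Finset.disjoint_iff_inter_eq_empty]
    rw [← h] at h1
    exact ⟨h1.1, hA.1 ha⟩

end SimplicialComplex
namespace SimplicialComplex

variable {V : Type*} [DecidableEq V]

lemma chain_exists (X : SimplicialComplex V) (r k : ℕ) (hk : k ≤ r) (hX : X.IsAmple r)
    (U : Finset V) (hU : ↑U ⊆ X.vertexSet) (hUr : U.card ≤ r - k)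
    (A : Set (Finset V)) (hA : X.IsSubcomplexOfInduced ↑U A) :
    ∀ j, j ≤ k → ∃ W : Finset V, W.card = j ∧ ↑W ⊆ X.vertexSet ∧ (∀ w ∈ W, w ∉ U) ∧
      (∀ w ∈ W, X.linkFaces w ∩ X.inducedFaces ↑U = A) ∧
      ∀ a c : Finset V, (a ∈ A ∨ a = ∅) → c ⊆ W → a ∪ c ≠ ∅ → a ∪ c ∈ X.faces := by
  intro j
  induction j with
  | zero =>
    intro _
    refine ⟨∅, rfl, by simp, by simp, by simp, ?_⟩
    rintro a c ha hc hne
    rw [Finset.subset_empty.mp hc, Finset.union_empty]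
    rw [Finset.subset_empty.mp hc, Finset.union_empty] at hne
    rcases ha with ha | ha
    · exact mem_A_face hA ha
    · exact absurd ha hne
  | succ j ih =>
    intro hjk
    obtain ⟨W, hWcard, hWvs, hWU, hWlink, rich⟩ := ih (Nat.le_of_succ_le hjk)
    -- the full complex on W
    set C : Set (Finset V) := {c : Finset V | c ⊆ W ∧ c ≠ ∅} with hC
    have hC1 : ∀ c ∈ C, c ⊆ W := fun c hc => hc.1
    have hC2 : ∅ ∉ C := fun h => h.2 rfl
    have hC3 : ∀ c ∈ C, ∀ t ⊆ c, t ≠ ∅ → t ∈ C := fun c hc t ht htne => ⟨ht.trans hc.1, htne⟩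
    have hsub : X.IsSubcomplexOfInduced ↑(U ∪ W) (joinF A C W) :=
      X.joinF_subcomplex hA hWU rich hC1 hC3
    have hUW : ↑(U ∪ W) ⊆ X.vertexSet := by
      rw [Finset.coe_union]; exact Set.union_subset hU hWvs
    have hcard : (U ∪ W).card ≤ r := by
      have := Finset.card_union_le U W
      omega
    obtain ⟨v, hv1, hv2, hv3⟩ := hX.2 (U ∪ W) hUW hcard (joinF A C W) hsub
    have hvU : v ∉ U := fun h => hv2 (Finset.mem_union_left _ h)
    have hvW : v ∉ W := fun h => hv2 (Finset.mem_union_right _ h)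
    refine ⟨insert v W, by rw [Finset.card_insert_of_notMem hvW, hWcard],
      by rw [Finset.coe_insert]; exact Set.insert_subset hv1 hWvs, ?_, ?_, ?_⟩
    · intro w hw
      rcases Finset.mem_insert.mp hw with h | h
      · exact h ▸ hvU
      · exact hWU w h
    · intro w hw
      rcases Finset.mem_insert.mp hw with h | h
      · exact h ▸ X.link_restrict hA hWU hv3
      · exact hWlink w h
    · intro a c ha hc hne
      by_cases hvc : v ∈ c
      · set c' : Finset V := c.erase v with hc'def
        have hc'W : c' ⊆ W := by
          intro x hx
          have hx' := hc (Finset.erase_subset v c hx)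
          rcases Finset.mem_insert.mp hx' with h | h
          · exact absurd h (Finset.ne_of_mem_erase hx)
          · exact h
        have hcins : c = insert v c' := (Finset.insert_erase hvc).symm
        have hrw : a ∪ c = insert v (a ∪ c') := by rw [hcins, Finset.union_insert]
        by_cases h0 : a ∪ c' = ∅
        · rw [hrw, h0]
          exact hv1
        · have hdiff : (a ∪ c') \ W = a := by
            rw [Finset.union_sdiff_distrib, Finset.sdiff_eq_empty_iff_subset.mpr hc'W,
              Finset.union_empty, Finset.sdiff_eq_self_iff_disjoint]
            rcases ha with h | h
            · exact Finset.disjoint_left.mpr fun x hx hxW => hWU x hxW (mem_A_subset hA h hx)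
            · rw [h]; exact Finset.disjoint_empty_left W
          have hj : a ∪ c' ∈ joinF A C W := by
            refine ⟨h0, ?_, ?_⟩
            · rw [hdiff]
              rcases ha with h | h
              · exact Or.inr h
              · exact Or.inl h
            · by_cases h' : (a ∪ c') ∩ W = ∅
              · exact Or.inl h'
              · exact Or.inr ⟨Finset.inter_subset_right, h'⟩
          rw [← hv3] at hj
          rw [hrw]
          exact hj.1.2.2
      · have hcW : c ⊆ W := by
          intro x hx
          rcases Finset.mem_insert.mp (hc hx) with h | h
          · exact absurd (h ▸ hx) hvc
          · exact h
        exact rich a c ha hcW hne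

end SimplicialComplex
namespace SimplicialComplex

variable {V : Type*} [DecidableEq V]

lemma exists_good_vertex (X : SimplicialComplex V) (r k : ℕ) (hk : k ≤ r) (hX : X.IsAmple r)
    (F : Finset (Finset V))
    (hsize : F.card + ∑ σ ∈ F, (σ.card - 1) < numComplexes k + k)
    (U : Finset V) (hU : ↑U ⊆ X.vertexSet) (hUr : U.card ≤ r - k)
    (A : Set (Finset V)) (hA : X.IsSubcomplexOfInduced ↑U A) :
    ∃ v, v ∈ X.vertexSet ∧ v ∉ U ∧ X.linkFaces v ∩ X.inducedFaces ↑U = A ∧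
      ∀ σ ∈ F, ¬(v ∈ σ ∧ (σ = {v} ∨ σ \ {v} ∈ A)) := by
  by_contra hcon
  push_neg at hcon
  obtain ⟨W, hWcard, hWvs, hWU, hWlink, rich⟩ := X.chain_exists r k hk hX U hU hUr A hA k le_rfl
  have det : ∀ v v' σ, v ∉ U → v' ∉ U → v ∈ σ → v' ∈ σ →
      (σ = {v} ∨ σ \ {v} ∈ A) → (σ = {v'} ∨ σ \ {v'} ∈ A) → v = v' := by
    intro v v' σ hv hv' hvs hv's h h'
    by_contra hne
    have hv'v : v' ≠ v := fun e => hne e.symm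
    rcases h with h | h
    · rw [h, Finset.mem_singleton] at hv's
      exact hne hv's.symm
    · have hmem : v' ∈ σ \ ({v} : Finset V) :=
        Finset.mem_sdiff.mpr ⟨hv's, by simpa using hv'v⟩
      exact hv' (mem_A_subset hA h hmem)
  set S : Set (Finset (Finset (Fin k))) :=
    {G | ∅ ∉ G ∧ ∀ s ∈ G, ∀ t ⊆ s, t ≠ ∅ → t ∈ G} with hS
  have e := W.equivFinOfCardEq hWcard
  set φ : Fin k → V := fun i => ((e.symm i : ↥W) : V) with hφ
  have hφinj : Function.Injective φ := fun i j h => e.symm.injective (Subtype.val_injective h)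
  have hφW : ∀ i, φ i ∈ W := fun i => (e.symm i).2
  set m : Finset (Fin k) → Finset V := fun s => s.image φ with hm
  have hminj : Function.Injective m := Finset.image_injective hφinj
  set CG : ↥S → Set (Finset V) :=
    fun G => m '' ↑(G : Finset (Finset (Fin k))) with hCGdef
  have hCG1 : ∀ G : ↥S, ∀ c ∈ CG G, c ⊆ W := by
    rintro G c ⟨g, hg, rfl⟩ x hx
    obtain ⟨i, _, rfl⟩ := Finset.mem_image.mp hx
    exact hφW i
  have hCG2 : ∀ G : ↥S, ∅ ∉ CG G := by
    rintro G ⟨g, hg, hgeq⟩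
    rw [Finset.image_eq_empty.mp hgeq] at hg
    exact G.2.1 hg
  have hCG3 : ∀ G : ↥S, ∀ c ∈ CG G, ∀ t ⊆ c, t ≠ ∅ → t ∈ CG G := by
    rintro G c ⟨g, hg, rfl⟩ t htc htne
    have himg : m (g.filter (fun i => φ i ∈ t)) = t := by
      ext x
      simp only [hm, Finset.mem_image, Finset.mem_filter]
      constructor
      · rintro ⟨i, ⟨_, hit⟩, rfl⟩
        exact hit
      · intro hxt
        obtain ⟨i, hig, rfl⟩ := Finset.mem_image.mp (htc hxt)
        exact ⟨i, ⟨hig, hxt⟩, rfl⟩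
    refine ⟨g.filter (fun i => φ i ∈ t), ?_, himg⟩
    refine G.2.2 g hg _ (Finset.filter_subset _ g) ?_
    intro h0
    rw [h0] at himg
    exact htne (himg.symm.trans (by simp [hm]))
  have hUW : ↑(U ∪ W) ⊆ X.vertexSet := by
    rw [Finset.coe_union]; exact Set.union_subset hU hWvs
  have hcardUW : (U ∪ W).card ≤ r := by
    have := Finset.card_union_le U W
    omega
  have hvexists : ∀ G : ↥S, ∃ v, v ∈ X.vertexSet ∧ v ∉ U ∪ W ∧
      X.linkFaces v ∩ X.inducedFaces ↑(U ∪ W) = joinF A (CG G) W := by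
    intro G
    obtain ⟨v, h1, h2, h3⟩ := hX.2 (U ∪ W) hUW hcardUW _
      (X.joinF_subcomplex hA hWU rich (hCG1 G) (hCG3 G))
    exact ⟨v, h1, h2, h3⟩
  choose vG hvG1 hvG2 hvG3 using hvexists
  have hvGU : ∀ G, vG G ∉ U := fun G h => hvG2 G (Finset.mem_union_left _ h)
  have hvGW : ∀ G, vG G ∉ W := fun G h => hvG2 G (Finset.mem_union_right _ h)
  have hvGlink : ∀ G, X.linkFaces (vG G) ∩ X.inducedFaces ↑U = A :=
    fun G => X.link_restrict hA hWU (hvG3 G)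
  have hvGinj : Function.Injective vG := by
    have hsub : ∀ a b : ↥S, CG a = CG b → (a : Finset (Finset (Fin k))) ⊆ b := by
      intro a b hab g hg
      have : m g ∈ CG b := hab ▸ ⟨g, hg, rfl⟩
      obtain ⟨g', hg', heq⟩ := this
      rwa [← hminj heq]
    intro G G' h
    have hJ : joinF A (CG G) W = joinF A (CG G') W := by
      rw [← hvG3 G, ← hvG3 G', h]
    have hCeq : CG G = CG G' := by
      ext c
      rw [mem_C_iff_joinF (hCG1 G) (hCG2 G), mem_C_iff_joinF (hCG1 G') (hCG2 G'), hJ]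
    exact Subtype.ext (Finset.Subset.antisymm (hsub G G' hCeq) (hsub G' G hCeq.symm))
  have spoil : ∀ v, v ∈ X.vertexSet → v ∉ U → X.linkFaces v ∩ X.inducedFaces ↑U = A →
      ∃ σ, σ ∈ F ∧ v ∈ σ ∧ (σ = {v} ∨ σ \ {v} ∈ A) := by
    intro v h1 h2 h3
    obtain ⟨σ, hσ1, hσ2⟩ := hcon v h1 h2 h3
    exact ⟨σ, hσ1, hσ2⟩
  set cnd : ↥S ⊕ {x // x ∈ W} → V := Sum.elim vG Subtype.val with hcnd
  have hcndprop : ∀ i : ↥S ⊕ {x // x ∈ W},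
      cnd i ∈ X.vertexSet ∧ cnd i ∉ U ∧
      X.linkFaces (cnd i) ∩ X.inducedFaces ↑U = A := by
    rintro (G | w)
    · exact ⟨hvG1 G, hvGU G, hvGlink G⟩
    · exact ⟨hWvs w.2, hWU w w.2, hWlink w w.2⟩
  have hcndinj : Function.Injective cnd := by
    rintro (G | w) (G' | w') h <;> simp only [hcnd, Sum.elim_inl, Sum.elim_inr] at h
    · exact congrArg Sum.inl (hvGinj h)
    · exact absurd (h ▸ w'.2) (hvGW G)
    · exact absurd (h.symm ▸ w.2) (hvGW G')
    · exact congrArg Sum.inr (Subtype.ext h)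
  choose σf hσF hσmem hσor using
    fun i : ↥S ⊕ {x // x ∈ W} =>
      spoil (cnd i) (hcndprop i).1 (hcndprop i).2.1 (hcndprop i).2.2
  have hσinj : Function.Injective σf := by
    intro i j h
    apply hcndinj
    exact det _ _ (σf i) (hcndprop i).2.1 (hcndprop j).2.1 (hσmem i) (h.symm ▸ hσmem j)
      (hσor i) (h.symm ▸ hσor j)
  have hcard1 : Nat.card (↥S ⊕ {x // x ∈ W}) = numComplexes k + k := by
    have h1 : Nat.card ↥S = numComplexes k := by
      rw [Nat.card_coe_set_eq]
      rfl
    have h2 : Nat.card {x // x ∈ W} = k := by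
      rw [Nat.card_eq_finsetCard, hWcard]
    rw [Nat.card_sum, h1, h2]
  have hle : Nat.card (↥S ⊕ {x // x ∈ W}) ≤ F.card := by
    have hinj : Function.Injective
        (fun i : ↥S ⊕ {x // x ∈ W} => (⟨σf i, hσF i⟩ : {x // x ∈ F})) :=
      fun i j h => hσinj (by simpa using congrArg Subtype.val h)
    have h2 := Nat.card_le_card_of_injective _ hinj
    rwa [Nat.card_eq_finsetCard] at h2
  omega

end SimplicialComplex
open SimplicialComplex in
/-- **Resilience of ample complexes** (Theorem 3.1): if `X` is `r`-ample and `Y` is obtained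
from `X` by removing a set `F` of simplices with `|F| + Σ_{σ ∈ F} dim σ < M'(k) + k`,
then `Y` is `(r-k)`-ample. -/
theorem removeFaces_isAmple {V : Type*} [DecidableEq V]
    (X : SimplicialComplex V) (r k : ℕ) (hk : k ≤ r) (hX : X.IsAmple r)
    (F : Finset (Finset V)) (hF : ∀ σ ∈ F, σ ∈ X.faces)
    (hsize : F.card + ∑ σ ∈ F, (σ.card - 1) < numComplexes k + k) :
    (X.removeFaces F).IsAmple (r - k) := by
  constructor
  · -- nonemptiness
    obtain ⟨v, hv1, _, _, hv4⟩ := X.exists_good_vertex r k hk hX F hsize ∅ (by simp)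
      (by simp) ∅ ⟨fun s hs => absurd hs (Set.notMem_empty s), fun s hs => absurd hs id⟩
    refine ⟨{v}, hv1, ?_⟩
    intro σ hσ hsub
    rcases Finset.subset_singleton_iff.mp hsub with h | h
    · exact X.not_empty_mem (h ▸ hF σ hσ)
    · exact hv4 σ hσ ⟨by rw [h]; exact Finset.mem_singleton_self v, Or.inl h⟩
  · intro U hUY hcard A hAY
    have hUX : ↑U ⊆ X.vertexSet := fun x hx => (hUY hx).1
    have hAX : X.IsSubcomplexOfInduced ↑U A :=
      ⟨fun s hs => ⟨(hAY.1 hs).1.1, (hAY.1 hs).2⟩, hAY.2⟩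
    obtain ⟨v, hv1, hv2, hv3, hv4⟩ :=
      X.exists_good_vertex r k hk hX F hsize U hUX hcard A hAX
    have hvY : v ∈ (X.removeFaces F).vertexSet := by
      refine ⟨hv1, ?_⟩
      intro σ hσ hsub
      rcases Finset.subset_singleton_iff.mp hsub with h | h
      · exact X.not_empty_mem (h ▸ hF σ hσ)
      · exact hv4 σ hσ ⟨by rw [h]; exact Finset.mem_singleton_self v, Or.inl h⟩
    refine ⟨v, hvY, hv2, ?_⟩
    ext s
    constructor
    · rintro ⟨⟨hvs, hsne, hins⟩, hsf, hsU⟩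
      have hmem : s ∈ X.linkFaces v ∩ X.inducedFaces ↑U := ⟨⟨hvs, hsne, hins.1⟩, hsf.1, hsU⟩
      rwa [hv3] at hmem
    · intro hs
      have hsX : s ∈ X.linkFaces v ∩ X.inducedFaces ↑U := by rw [hv3]; exact hs
      have hsY : s ∈ (X.removeFaces F).faces := (hAY.1 hs).1
      have hsU : ↑s ⊆ (↑U : Set V) := (hAY.1 hs).2
      refine ⟨⟨hsX.1.1, hsX.1.2.1, hsX.1.2.2, ?_⟩, hsY, hsU⟩
      intro σ hσ hsub
      by_cases hvσ : v ∈ σ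
      · apply hv4 σ hσ
        refine ⟨hvσ, ?_⟩
        by_cases hσv : σ \ {v} = ∅
        · left
          apply Finset.Subset.antisymm
          · intro x hx
            rw [Finset.mem_singleton]
            by_contra hxv
            exact (Finset.notMem_empty x)
              (hσv ▸ Finset.mem_sdiff.mpr ⟨hx, by simpa using hxv⟩)
          · exact Finset.singleton_subset_iff.mpr hvσ
        · right
          have hsubs : σ \ {v} ⊆ s := by
            intro x hx
            rcases Finset.mem_insert.mp (hsub (Finset.mem_sdiff.mp hx).1) with h | h
            · exact absurd h (by simpa using (Finset.mem_sdiff.mp hx).2)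
            · exact h
          exact hAY.2 s hs _ hsubs hσv
      · have hσs : σ ⊆ s := by
          intro x hx
          rcases Finset.mem_insert.mp (hsub hx) with h | h
          · exact absurd (h ▸ hx) hvσ
          · exact h
        exact hsY.2 σ hσ hσs
end

section
/- For every r ≥ 5 and every n ≥ r·2^r·2^{2^r}, the inequality n^r · 2^{2^r} · (1 − 2^{−2^r})^{n−r} < 1 holds; consequently (since this expression bounds above the probability that a medial-regime random simplicial complex with p = 1/2 on n vertices fails to be r-ample) there exists an r-ample simplicial complex with exactly n vertices. -/
lemma count_step {I : Type*} [Fintype I] [DecidableEq I] (C : Finset I)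
    (S : Finset (I → Bool)) (E : (I → Bool) → Prop) [DecidablePred E]
    (hcyl : ∀ f ∈ S, ∀ g : I → Bool, (∀ i ∉ C, g i = f i) → g ∈ S)
    (hgood : ∀ f ∈ S, ∃ g : I → Bool, (∀ i ∉ C, g i = f i) ∧ E g) :
    (S.filter fun f => ¬ E f).card * 2 ^ C.card ≤ S.card * (2 ^ C.card - 1) := by
  classical
  set π : (I → Bool) → (I → Bool) := fun f i => if i ∈ C then false else f i with hπ
  have hπeq : ∀ f : I → Bool, ∀ i, π f i = if i ∈ C then false else f i := fun f i => rfl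
  -- full fibers have cardinality 2 ^ C.card
  have hfib : ∀ h ∈ S.image π, (S.filter fun f => π f = h).card = 2 ^ C.card := by
    intro h hh
    obtain ⟨f0, hf0S, hf0⟩ := Finset.mem_image.mp hh
    set φ : ({x // x ∈ C} → Bool) → (I → Bool) :=
      fun b i => if hc : i ∈ C then b ⟨i, hc⟩ else h i with hφ
    have hoff : ∀ i ∉ C, h i = f0 i := by
      intro i hi
      rw [← hf0, hπeq, if_neg hi]
    have hin : ∀ i ∈ C, h i = false := by
      intro i hi
      rw [← hf0, hπeq, if_pos hi]
    have himg : Finset.univ.image φ = S.filter fun f => π f = h := by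
      ext g
      simp only [Finset.mem_image, Finset.mem_univ, true_and, Finset.mem_filter]
      constructor
      · rintro ⟨b, rfl⟩
        have hb1 : ∀ i ∉ C, φ b i = f0 i := by
          intro i hi
          rw [hφ]
          simp only [dif_neg hi]
          exact hoff i hi
        refine ⟨hcyl f0 hf0S _ hb1, ?_⟩
        funext i
        by_cases hc : i ∈ C
        · rw [hπeq, if_pos hc, hin i hc]
        · rw [hπeq, if_neg hc, hφ]
          simp only [dif_neg hc]
      · rintro ⟨hgS, hgπ⟩
        refine ⟨fun c => g c.1, ?_⟩
        funext i
        rw [hφ]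
        by_cases hc : i ∈ C
        · simp only [dif_pos hc]
        · simp only [dif_neg hc]
          rw [← hgπ, hπeq, if_neg hc]
    have hinj : Function.Injective φ := by
      intro b b' hbb
      funext c
      have := congrFun hbb c.1
      rw [hφ] at this
      simpa only [dif_pos c.2] using this
    rw [← himg, Finset.card_image_of_injective _ hinj, Finset.card_univ,
      Fintype.card_fun, Fintype.card_coe, Fintype.card_bool]
  -- bad fibers have cardinality ≤ 2 ^ C.card - 1
  have hbadfib : ∀ h ∈ S.image π,
      ((S.filter fun f => ¬ E f).filter fun f => π f = h).card ≤ 2 ^ C.card - 1 := by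
    intro h hh
    obtain ⟨f0, hf0S, hf0⟩ := Finset.mem_image.mp hh
    obtain ⟨g, hgag, hgE⟩ := hgood f0 hf0S
    have hgS : g ∈ S := hcyl f0 hf0S g hgag
    have hgπ : π g = h := by
      funext i
      by_cases hc : i ∈ C
      · rw [hπeq, if_pos hc, ← hf0, hπeq, if_pos hc]
      · rw [hπeq, if_neg hc, hgag i hc, ← hf0, hπeq, if_neg hc]
    have hsub : ((S.filter fun f => ¬ E f).filter fun f => π f = h)
        ⊆ (S.filter fun f => π f = h).erase g := by
      intro x hx
      simp only [Finset.mem_filter] at hx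
      refine Finset.mem_erase.mpr ⟨?_, Finset.mem_filter.mpr ⟨hx.1.1, hx.2⟩⟩
      rintro rfl
      exact hx.1.2 hgE
    calc ((S.filter fun f => ¬ E f).filter fun f => π f = h).card
        ≤ ((S.filter fun f => π f = h).erase g).card := Finset.card_le_card hsub
      _ = (S.filter fun f => π f = h).card - 1 :=
          Finset.card_erase_of_mem (Finset.mem_filter.mpr ⟨hgS, hgπ⟩)
      _ = 2 ^ C.card - 1 := by rw [hfib h hh]
  have hS : S.card = (S.image π).card * 2 ^ C.card := by
    rw [Finset.card_eq_sum_card_fiberwise (f := π) (t := S.image π)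
      (fun f hf => Finset.mem_image_of_mem π hf)]
    rw [Finset.sum_congr rfl hfib, Finset.sum_const, smul_eq_mul]
  have hBad : (S.filter fun f => ¬ E f).card ≤ (S.image π).card * (2 ^ C.card - 1) := by
    rw [Finset.card_eq_sum_card_fiberwise (f := π) (t := S.image π)
      (fun f hf => Finset.mem_image_of_mem π (Finset.mem_filter.mp hf).1)]
    calc ∑ h ∈ S.image π, ((S.filter fun f => ¬ E f).filter fun f => π f = h).card
        ≤ ∑ h ∈ S.image π, (2 ^ C.card - 1) := Finset.sum_le_sum hbadfib
      _ = (S.image π).card * (2 ^ C.card - 1) := by rw [Finset.sum_const, smul_eq_mul]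
  calc (S.filter fun f => ¬ E f).card * 2 ^ C.card
      ≤ (S.image π).card * (2 ^ C.card - 1) * 2 ^ C.card :=
        Nat.mul_le_mul_right _ hBad
    _ = S.card * (2 ^ C.card - 1) := by rw [hS]; ring

lemma scale_pow (a b c K : ℕ) (h : a * 2 ^ c ≤ b * (2 ^ c - 1)) (hcK : c ≤ K) :
    a * 2 ^ K ≤ b * (2 ^ K - 1) := by
  have h1 : 2 ^ c * 2 ^ (K - c) = 2 ^ K := by
    rw [← pow_add]; congr 1; omega
  have h2 : 1 ≤ 2 ^ (K - c) := Nat.one_le_two_pow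
  have h3 : 1 ≤ 2 ^ c := Nat.one_le_two_pow
  calc a * 2 ^ K = a * 2 ^ c * 2 ^ (K - c) := by rw [mul_assoc, h1]
    _ ≤ b * (2 ^ c - 1) * 2 ^ (K - c) := Nat.mul_le_mul_right _ h
    _ = b * (2 ^ c * 2 ^ (K - c) - 2 ^ (K - c)) := by
        rw [mul_assoc, Nat.sub_mul, one_mul]
    _ = b * (2 ^ K - 2 ^ (K - c)) := by rw [h1]
    _ ≤ b * (2 ^ K - 1) := Nat.mul_le_mul_left _ (by omega)

namespace AmpleAux

open SimplicialComplex

variable {n : ℕ}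

abbrev Om (n : ℕ) := Finset (Fin n) → Bool

def good (f : Om n) (s : Finset (Fin n)) : Prop :=
  ∀ t ∈ s.powerset, 2 ≤ t.card → f t = true

instance (f : Om n) (s : Finset (Fin n)) : Decidable (good f s) := by
  unfold good; infer_instance

def cx (f : Om n) : SimplicialComplex (Fin n) where
  faces := {s | s.Nonempty ∧ good f s}
  not_empty_mem := by simp [Finset.not_nonempty_empty]
  down_closed := by
    rintro s ⟨_, hg⟩ t hts ht
    refine ⟨Finset.nonempty_iff_ne_empty.mpr ht, fun u hu hc => ?_⟩
    exact hg u (Finset.mem_powerset.mpr ((Finset.mem_powerset.mp hu).trans hts)) hc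

lemma mem_faces_cx {f : Om n} {s : Finset (Fin n)} :
    s ∈ (cx f).faces ↔ s.Nonempty ∧ good f s := Iff.rfl

lemma vertexSet_cx (f : Om n) : (cx f).vertexSet = Set.univ := by
  ext v
  simp only [vertexSet, Set.mem_setOf_eq, Set.mem_univ, iff_true, mem_faces_cx]
  refine ⟨Finset.singleton_nonempty v, fun t ht hc => ?_⟩
  have := Finset.card_le_card (Finset.mem_powerset.mp ht)
  simp only [Finset.card_singleton] at this
  omega

def indF (f : Om n) (U : Finset (Fin n)) : Finset (Finset (Fin n)) :=
  U.powerset.filter (fun s => s.Nonempty ∧ good f s)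

lemma mem_indF {f : Om n} {U s : Finset (Fin n)} :
    s ∈ indF f U ↔ s ⊆ U ∧ s.Nonempty ∧ good f s := by
  simp [indF, Finset.mem_filter, Finset.mem_powerset, and_assoc]

lemma coe_indF (f : Om n) (U : Finset (Fin n)) :
    ((indF f U : Finset (Finset (Fin n))) : Set (Finset (Fin n)))
      = (cx f).inducedFaces ↑U := by
  ext s
  simp only [Finset.mem_coe, mem_indF, inducedFaces, Set.mem_setOf_eq, mem_faces_cx,
    Finset.coe_subset]
  tauto

def linkInd (f : Om n) (v : Fin n) (U : Finset (Fin n)) : Finset (Finset (Fin n)) :=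
  (indF f U).filter (fun s => v ∉ s ∧ good f (insert v s))

lemma mem_linkInd {f : Om n} {v : Fin n} {U s : Finset (Fin n)} :
    s ∈ linkInd f v U ↔ (s ⊆ U ∧ s.Nonempty ∧ good f s) ∧ v ∉ s ∧ good f (insert v s) := by
  simp [linkInd, Finset.mem_filter, mem_indF]

lemma coe_linkInd (f : Om n) (v : Fin n) (U : Finset (Fin n)) :
    ((linkInd f v U : Finset (Finset (Fin n))) : Set (Finset (Fin n)))
      = (cx f).linkFaces v ∩ (cx f).inducedFaces ↑U := by
  ext s
  simp only [Finset.mem_coe, mem_linkInd, Set.mem_inter_iff, linkFaces, Set.mem_setOf_eq,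
    inducedFaces, mem_faces_cx, Finset.coe_subset, ← Finset.nonempty_iff_ne_empty]
  constructor
  · rintro ⟨⟨hU, hne, hg⟩, hv, hgi⟩
    exact ⟨⟨hv, hne, Finset.insert_nonempty v s, hgi⟩, ⟨hne, hg⟩, hU⟩
  · rintro ⟨⟨hv, hne, _, hgi⟩, ⟨_, hg⟩, hU⟩
    exact ⟨⟨hU, hne, hg⟩, hv, hgi⟩

/-- The coordinates associated with a vertex `v` relative to `U`. -/
def Cv (v : Fin n) (U : Finset (Fin n)) : Finset (Finset (Fin n)) :=
  (U.powerset.filter (fun t => t.Nonempty)).image (insert v)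

lemma mem_Cv {v : Fin n} {U x : Finset (Fin n)} (hv : v ∉ U) :
    x ∈ Cv v U ↔ v ∈ x ∧ x.erase v ⊆ U ∧ (x.erase v).Nonempty := by
  simp only [Cv, Finset.mem_image, Finset.mem_filter, Finset.mem_powerset]
  constructor
  · rintro ⟨t, ⟨htU, htne⟩, rfl⟩
    have hvt : v ∉ t := fun h => hv (htU h)
    rw [Finset.erase_insert hvt]
    exact ⟨Finset.mem_insert_self v t, htU, htne⟩
  · rintro ⟨hvx, hsub, hne⟩
    exact ⟨x.erase v, ⟨hsub, hne⟩, Finset.insert_erase hvx⟩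

lemma v_mem_of_mem_Cv {v : Fin n} {U x : Finset (Fin n)} (hv : v ∉ U) (hx : x ∈ Cv v U) :
    v ∈ x := ((mem_Cv hv).mp hx).1

lemma card_Cv (v : Fin n) (U : Finset (Fin n)) : (Cv v U).card ≤ 2 ^ U.card :=
  le_trans Finset.card_image_le (le_trans (Finset.card_filter_le _ _)
    (le_of_eq (Finset.card_powerset U)))

lemma good_congr {f g : Om n} {s : Finset (Fin n)} (h : ∀ t ⊆ s, g t = f t) :
    good g s ↔ good f s := by
  unfold good
  constructor <;> intro hgood t ht hc
  · rw [← h t (Finset.mem_powerset.mp ht)]; exact hgood t ht hc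
  · rw [h t (Finset.mem_powerset.mp ht)]; exact hgood t ht hc

lemma indF_invariant {f g : Om n} {v : Fin n} {U : Finset (Fin n)} (hv : v ∉ U)
    (hag : ∀ x ∉ Cv v U, g x = f x) : indF g U = indF f U := by
  ext s
  simp only [mem_indF]
  constructor <;> rintro ⟨hsU, hne, hg⟩ <;> refine ⟨hsU, hne, ?_⟩
  all_goals
    have hcong : ∀ t ⊆ s, g t = f t := by
      intro t hts
      apply hag
      intro hC
      exact hv (hsU (hts (v_mem_of_mem_Cv hv hC)))
  · exact (good_congr hcong).mp hg
  · exact (good_congr hcong).mpr hg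

lemma linkInd_invariant {f g : Om n} {v w : Fin n} {U : Finset (Fin n)} (hv : v ∉ U)
    (hw : w ≠ v) (hag : ∀ x ∉ Cv v U, g x = f x) : linkInd g w U = linkInd f w U := by
  ext s
  simp only [mem_linkInd]
  constructor <;> rintro ⟨⟨hsU, hne, hg⟩, hws, hgi⟩
  all_goals
    have hcong : ∀ t ⊆ s, g t = f t := by
      intro t hts
      apply hag
      intro hC
      exact hv (hsU (hts (v_mem_of_mem_Cv hv hC)))
    have hcongi : ∀ t ⊆ insert w s, g t = f t := by
      intro t hts
      apply hag
      intro hC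
      have hvt := v_mem_of_mem_Cv hv hC
      rcases Finset.mem_insert.mp (hts hvt) with h | h
      · exact hw h.symm
      · exact hv (hsU h)
  · exact ⟨⟨hsU, hne, (good_congr hcong).mp hg⟩, hws, (good_congr hcongi).mp hgi⟩
  · exact ⟨⟨hsU, hne, (good_congr hcong).mpr hg⟩, hws, (good_congr hcongi).mpr hgi⟩

/-- The "good resampling" of `f` at `v` relative to `U` and `A`. -/
def resample (f : Om n) (v : Fin n) (U : Finset (Fin n)) (A : Finset (Finset (Fin n))) : Om n :=
  fun x => if x ∈ Cv v U then decide (x.erase v ∈ A) else f x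

lemma resample_agree (f : Om n) (v : Fin n) (U : Finset (Fin n)) (A : Finset (Finset (Fin n))) :
    ∀ x ∉ Cv v U, resample f v U A x = f x := by
  intro x hx
  simp [resample, hx]

lemma resample_linkInd {f : Om n} {v : Fin n} {U : Finset (Fin n)} {A : Finset (Finset (Fin n))}
    (hv : v ∉ U) (hA : A ⊆ indF f U)
    (hdc : ∀ s ∈ A, ∀ t ⊆ s, t ≠ ∅ → t ∈ A) :
    linkInd (resample f v U A) v U = A := by
  set g := resample f v U A with hg
  have hagree := resample_agree f v U A
  have hiF : indF g U = indF f U := indF_invariant hv hagree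
  ext s
  simp only [mem_linkInd]
  constructor
  · rintro ⟨⟨hsU, hne, _⟩, hvs, hgi⟩
    -- evaluate the coordinate insert v s
    have hins : insert v s ∈ Cv v U := by
      rw [mem_Cv hv, Finset.erase_insert hvs]
      exact ⟨Finset.mem_insert_self v s, hsU, hne⟩
    have hcard : 2 ≤ (insert v s).card := by
      rw [Finset.card_insert_of_notMem hvs]
      have := Finset.card_pos.mpr hne
      omega
    have := hgi (insert v s) (Finset.mem_powerset.mpr (subset_refl _)) hcard
    rw [hg] at this
    simp only [resample, if_pos hins, decide_eq_true_eq, Finset.erase_insert hvs] at this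
    exact this
  · intro hsA
    have hsf : s ∈ indF f U := hA hsA
    obtain ⟨hsU, hne, hgood⟩ := mem_indF.mp hsf
    have hvs : v ∉ s := fun h => hv (hsU h)
    have hgoodg : good g s := by
      refine (good_congr ?_).mpr hgood
      intro t hts
      apply hagree
      intro hC
      exact hv (hsU (hts (v_mem_of_mem_Cv hv hC)))
    refine ⟨⟨hsU, hne, hgoodg⟩, hvs, ?_⟩
    intro t ht hc
    have hts : t ⊆ insert v s := Finset.mem_powerset.mp ht
    by_cases hvt : v ∈ t
    · have htC : t ∈ Cv v U := by
        rw [mem_Cv hv]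
        have h1 : t.erase v ⊆ s := by
          intro x hx
          have hxt := Finset.mem_of_mem_erase hx
          rcases Finset.mem_insert.mp (hts hxt) with h | h
          · exact absurd h (Finset.ne_of_mem_erase hx)
          · exact h
        have h2 : (t.erase v).Nonempty := by
          rw [← Finset.card_pos, Finset.card_erase_of_mem hvt]
          omega
        exact ⟨hvt, h1.trans hsU, h2⟩
      rw [hg]
      simp only [resample, if_pos htC, decide_eq_true_eq]
      apply hdc s hsA
      · intro x hx
        have hxt := Finset.mem_of_mem_erase hx
        rcases Finset.mem_insert.mp (hts hxt) with h | h
        · exact absurd h (Finset.ne_of_mem_erase hx)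
        · exact h
      · rw [← Finset.nonempty_iff_ne_empty, ← Finset.card_pos, Finset.card_erase_of_mem hvt]
        omega
    · have hts' : t ⊆ s := fun x hx => by
        rcases Finset.mem_insert.mp (hts hx) with h | h
        · exact absurd (h ▸ hx) hvt
        · exact h
      have htC : t ∉ Cv v U := fun hC => hvt (v_mem_of_mem_Cv hv hC)
      rw [hg]
      simp only [resample, if_neg htC]
      exact hgood t (Finset.mem_powerset.mpr hts') hc

def Bad (U : Finset (Fin n)) (A : Finset (Finset (Fin n))) (W : Finset (Fin n)) :
    Finset (Om n) :=
  Finset.univ.filter (fun f => A ⊆ indF f U ∧ ∀ v ∈ W, linkInd f v U ≠ A)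

lemma mem_Bad {U : Finset (Fin n)} {A : Finset (Finset (Fin n))} {W : Finset (Fin n)}
    {f : Om n} : f ∈ Bad U A W ↔ A ⊆ indF f U ∧ ∀ v ∈ W, linkInd f v U ≠ A := by
  simp [Bad]

lemma Bad_step {U : Finset (Fin n)} {A : Finset (Finset (Fin n))} {W : Finset (Fin n)}
    {v : Fin n} (hv : v ∉ U) (hvW : v ∉ W)
    (hdc : ∀ s ∈ A, ∀ t ⊆ s, t ≠ ∅ → t ∈ A) :
    (Bad U A (insert v W)).card * 2 ^ 2 ^ U.card
      ≤ (Bad U A W).card * (2 ^ 2 ^ U.card - 1) := by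
  have hfilter : Bad U A (insert v W)
      = (Bad U A W).filter (fun f => ¬ (linkInd f v U = A)) := by
    ext f
    simp only [mem_Bad, Finset.mem_filter, Finset.forall_mem_insert]
    tauto
  rw [hfilter]
  refine scale_pow _ _ (Cv v U).card _ ?_ (card_Cv v U)
  refine count_step (Cv v U) (Bad U A W) (fun f => linkInd f v U = A) ?_ ?_
  · intro f hf g hag
    rw [mem_Bad] at hf ⊢
    refine ⟨by rw [indF_invariant hv hag]; exact hf.1, fun w hw => ?_⟩
    have hwv : w ≠ v := fun h => hvW (h ▸ hw)
    rw [linkInd_invariant hv hwv hag]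
    exact hf.2 w hw
  · intro f hf
    rw [mem_Bad] at hf
    exact ⟨resample f v U A, resample_agree f v U A,
      resample_linkInd hv hf.1 hdc⟩

lemma Bad_bound {U : Finset (Fin n)} {A : Finset (Finset (Fin n))}
    (hdc : ∀ s ∈ A, ∀ t ⊆ s, t ≠ ∅ → t ∈ A) :
    ∀ W : Finset (Fin n), Disjoint W U →
      (Bad U A W).card * (2 ^ 2 ^ U.card) ^ W.card
        ≤ 2 ^ 2 ^ n * (2 ^ 2 ^ U.card - 1) ^ W.card := by
  intro W
  induction W using Finset.induction_on with
  | empty =>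
    intro _
    simp only [Finset.card_empty, pow_zero, mul_one]
    calc (Bad U A ∅).card ≤ (Finset.univ : Finset (Om n)).card := Finset.card_filter_le _ _
      _ = 2 ^ 2 ^ n := by
          rw [Finset.card_univ]
          rw [Fintype.card_fun, Fintype.card_bool, Fintype.card_finset, Fintype.card_fin]
  | @insert v W hvW ih =>
    intro hdisj
    have hv : v ∉ U := Finset.disjoint_left.mp hdisj (Finset.mem_insert_self v W)
    have hW : Disjoint W U := Finset.disjoint_of_subset_left (Finset.subset_insert v W) hdisj
    rw [Finset.card_insert_of_notMem hvW, pow_succ, pow_succ]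
    calc (Bad U A (insert v W)).card * ((2 ^ 2 ^ U.card) ^ W.card * 2 ^ 2 ^ U.card)
        = (Bad U A (insert v W)).card * 2 ^ 2 ^ U.card * (2 ^ 2 ^ U.card) ^ W.card := by ring
      _ ≤ (Bad U A W).card * (2 ^ 2 ^ U.card - 1) * (2 ^ 2 ^ U.card) ^ W.card :=
          Nat.mul_le_mul_right _ (Bad_step hv hvW hdc)
      _ = (Bad U A W).card * (2 ^ 2 ^ U.card) ^ W.card * (2 ^ 2 ^ U.card - 1) := by ring
      _ ≤ 2 ^ 2 ^ n * (2 ^ 2 ^ U.card - 1) ^ W.card * (2 ^ 2 ^ U.card - 1) :=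
          Nat.mul_le_mul_right _ (ih hW)
      _ = 2 ^ 2 ^ n * ((2 ^ 2 ^ U.card - 1) ^ W.card * (2 ^ 2 ^ U.card - 1)) := by ring

lemma not_ample_mem_bad {f : Om n} {r : ℕ} (hr : 1 ≤ r) (hrn : r ≤ n)
    (h : ¬ (cx f).IsAmple r) :
    ∃ U : Finset (Fin n), U.card = r ∧ ∃ A : Finset (Finset (Fin n)),
      A ⊆ U.powerset ∧ (∀ s ∈ A, ∀ t ⊆ s, t ≠ ∅ → t ∈ A) ∧ f ∈ Bad U A Uᶜ := by
  classical
  have hn0 : 0 < n := by omega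
  rw [IsAmple] at h
  push_neg at h
  have hne : (cx f).faces.Nonempty := by
    refine ⟨{⟨0, hn0⟩}, ?_⟩
    rw [mem_faces_cx]
    refine ⟨Finset.singleton_nonempty _, fun t ht hc => ?_⟩
    have := Finset.card_le_card (Finset.mem_powerset.mp ht)
    simp only [Finset.card_singleton] at this
    omega
  obtain ⟨U₀, hU₀v, hU₀card, A₀, hA₀, hfail⟩ := h hne
  obtain ⟨U, hU₀U, -, hUcard⟩ :=
    Finset.exists_subsuperset_card_eq (Finset.subset_univ U₀) hU₀card
      (by rw [Finset.card_univ, Fintype.card_fin]; exact hrn)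
  refine ⟨U, hUcard, ?_⟩
  set A : Finset (Finset (Fin n)) := U.powerset.filter (fun s => s ∈ A₀) with hA
  have hsubU : ∀ s ∈ A₀, s ⊆ U := by
    intro s hs
    have := (hA₀.1 hs).2
    rw [Finset.coe_subset] at *
    exact Finset.coe_subset.mp (this.trans (Finset.coe_subset.mpr hU₀U))
  have hcoe : (A : Set (Finset (Fin n))) = A₀ := by
    ext s
    simp only [hA, Finset.coe_filter, Set.mem_setOf_eq, Finset.mem_powerset]
    exact ⟨fun h => h.2, fun h => ⟨hsubU s h, h⟩⟩
  have hmemA : ∀ s, s ∈ A ↔ s ∈ A₀ := by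
    intro s
    rw [← Finset.mem_coe, hcoe]
  have hdc : ∀ s ∈ A, ∀ t ⊆ s, t ≠ ∅ → t ∈ A := by
    intro s hs t hts ht
    rw [hmemA] at hs ⊢
    exact hA₀.2 s hs t hts ht
  refine ⟨A, by rw [hA]; exact Finset.filter_subset _ _, hdc, ?_⟩
  rw [mem_Bad]
  constructor
  · intro s hs
    rw [hmemA] at hs
    have hsf := hA₀.1 hs
    rw [mem_indF]
    exact ⟨hsubU s hs, hsf.1.1, hsf.1.2⟩
  · intro v hv heq
    have hvU : v ∉ U := Finset.mem_compl.mp hv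
    have hvU₀ : v ∉ U₀ := fun h => hvU (hU₀U h)
    have hset : (cx f).linkFaces v ∩ (cx f).inducedFaces ↑U = A₀ := by
      rw [← coe_linkInd, heq, hcoe]
    have hset₀ : (cx f).linkFaces v ∩ (cx f).inducedFaces ↑U₀ = A₀ := by
      ext s
      constructor
      · rintro ⟨hl, hsf, hsub⟩
        rw [← hset]
        exact ⟨hl, hsf, hsub.trans (Finset.coe_subset.mpr hU₀U)⟩
      · intro hs
        have hs' : s ∈ (cx f).linkFaces v ∩ (cx f).inducedFaces ↑U := hset ▸ hs
        exact ⟨hs'.1, hA₀.1 hs⟩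
    exact hfail v (by rw [vertexSet_cx]; trivial) hvU₀ hset₀

end AmpleAux

section Analytic

open Real

lemma aux1 : ∀ r : ℕ, 6 ≤ r → 3 * r ^ 2 ≤ 2 * 2 ^ r := by
  intro r hr
  induction r with
  | zero => omega
  | succ k ih =>
    rcases Nat.lt_or_ge k 6 with hk | hk
    · have : k = 5 := by omega
      subst this; norm_num
    · have h1 := ih hk
      have h2 : (k + 1) ^ 2 ≤ 2 * k ^ 2 := by nlinarith
      have h3 : 2 ^ (k + 1) = 2 * 2 ^ k := by ring
      nlinarith

lemma aux2 (r : ℕ) (hr : 6 ≤ r) : r ≤ 2 ^ (r - 2) := by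
  have h1 := aux1 r hr
  have h2 : 4 * 2 ^ (r - 2) = 2 ^ r := by
    have : r - 2 + 2 = r := by omega
    calc 4 * 2 ^ (r - 2) = 2 ^ (r - 2 + 2) := by ring
    _ = 2 ^ r := by rw [this]
  nlinarith

lemma log_aux (r : ℕ) (hr : 5 ≤ r) :
    (r : ℝ) * Real.log r + ((r : ℝ) ^ 2 + ((r : ℝ) + 1) * 2 ^ r) * Real.log 2 + 1
      ≤ (r : ℝ) * 2 ^ r := by
  rcases Nat.lt_or_ge r 6 with h6 | h6
  · have hr5 : r = 5 := by omega
    subst hr5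
    have h5 : Real.log 5 ≤ 2 * Real.log 2 + 1 / 4 := by
      have h54 : Real.log (5 / 4 : ℝ) ≤ 5 / 4 - 1 := Real.log_le_sub_one_of_pos (by norm_num)
      have : (5 : ℝ) = 4 * (5 / 4) := by norm_num
      rw [this, Real.log_mul (by norm_num) (by norm_num)]
      have h4 : Real.log (4 : ℝ) = 2 * Real.log 2 := by
        rw [show (4 : ℝ) = 2 ^ 2 by norm_num, Real.log_pow]
        push_cast; ring
      rw [h4]; linarith
    have hl2 := Real.log_two_lt_d9
    norm_num
    nlinarith
  · have hlogr : Real.log r ≤ ((r : ℝ) - 2) * Real.log 2 := by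
      have h1 : (r : ℝ) ≤ 2 ^ (r - 2 : ℕ) := by
        exact_mod_cast aux2 r h6
      have h2 : Real.log r ≤ Real.log ((2 : ℝ) ^ (r - 2 : ℕ)) :=
        Real.log_le_log (by positivity) h1
      rwa [Real.log_pow, Nat.cast_sub (by omega)] at h2
    have hx : (3 : ℝ) * r ^ 2 ≤ 2 * 2 ^ r := by exact_mod_cast aux1 r h6
    have hl2 := Real.log_two_lt_d9
    have hl2' : 0 < Real.log 2 := Real.log_pos (by norm_num)
    have hr6 : (6 : ℝ) ≤ (r : ℝ) := by exact_mod_cast h6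
    have key : ((r : ℝ) * ((r : ℝ) - 2) + ((r : ℝ) ^ 2 + ((r : ℝ) + 1) * 2 ^ r))
        * Real.log 2 + 1 ≤ (r : ℝ) * 2 ^ r := by
      nlinarith [sq_nonneg ((r : ℝ) - 6), pow_pos (show (0:ℝ) < 2 by norm_num) r,
        mul_nonneg (sub_nonneg.mpr hr6) (le_of_lt (pow_pos (show (0:ℝ) < 2 by norm_num) r))]
    nlinarith [mul_le_mul_of_nonneg_right hlogr (show (0:ℝ) ≤ r by positivity)]

lemma base_ineq (r : ℕ) (hr : 5 ≤ r) :
    ((r * 2 ^ r * 2 ^ 2 ^ r : ℕ) : ℝ) ^ r * 2 ^ 2 ^ r *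
      (1 - (1 / 2 : ℝ) ^ 2 ^ r) ^ (r * 2 ^ r * 2 ^ 2 ^ r - r) < 1 := by
  set N : ℕ := r * 2 ^ r * 2 ^ 2 ^ r with hN
  set Q : ℝ := 2 ^ 2 ^ r with hQ
  have hQ0 : (0 : ℝ) < Q := by positivity
  have hrQ : (r : ℝ) < Q := by
    have h1 : r < 2 ^ r := Nat.lt_two_pow_self (n := r)
    have h2 : 2 ^ r ≤ 2 ^ 2 ^ r := Nat.pow_le_pow_right (by norm_num) (Nat.le_of_lt (Nat.lt_two_pow_self (n := r)))
    have : r < 2 ^ 2 ^ r := lt_of_lt_of_le h1 h2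
    rw [hQ]; exact_mod_cast this
  have hhalf : (1 - (1 / 2 : ℝ) ^ 2 ^ r) = 1 - 1 / Q := by
    rw [hQ, div_pow, one_pow]
  have h2Q : (2 : ℝ) ≤ Q := by
    rw [hQ]
    calc (2 : ℝ) = 2 ^ 1 := (pow_one 2).symm
    _ ≤ 2 ^ 2 ^ r := pow_le_pow_right₀ one_le_two Nat.one_le_two_pow
  have hθ0 : (0 : ℝ) ≤ 1 - 1 / Q := by
    have : 1 / Q ≤ 1 := by rw [div_le_one hQ0]; linarith
    linarith
  have hθe : 1 - 1 / Q ≤ Real.exp (-(1 / Q)) := by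
    have := Real.add_one_le_exp (-(1 / Q)); linarith
  have hrN : r ≤ N := by
    rw [hN]
    calc r = r * 1 * 1 := by ring
    _ ≤ r * 2 ^ r * 2 ^ 2 ^ r := by
        apply Nat.mul_le_mul (Nat.mul_le_mul_left r Nat.one_le_two_pow) Nat.one_le_two_pow
  have hmcast : ((N - r : ℕ) : ℝ) = (N : ℝ) - r := by
    rw [Nat.cast_sub hrN]
  have hNQ : (N : ℝ) = (r : ℝ) * 2 ^ r * Q := by
    rw [hN, hQ]; push_cast; ring
  have hN0 : (0 : ℝ) < (N : ℝ) := by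
    rw [hNQ]; positivity
  -- main exponential bound
  have hlog : Real.log ((N : ℝ) ^ r * Q) < ((N - r : ℕ) : ℝ) / Q := by
    have hlogN : Real.log (N : ℝ) = Real.log r + (r : ℝ) * Real.log 2 + (2 ^ r : ℝ) * Real.log 2 := by
      rw [hNQ, Real.log_mul (by positivity) (by positivity),
        Real.log_mul (by positivity) (by positivity), hQ, Real.log_pow, Real.log_pow]
      push_cast; ring
    have h1 : Real.log ((N : ℝ) ^ r * Q) =
        (r : ℝ) * Real.log (N : ℝ) + (2 ^ r : ℝ) * Real.log 2 := by
      rw [Real.log_mul (by positivity) (by positivity), Real.log_pow, hQ, Real.log_pow]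
      push_cast; ring
    have h2 := log_aux r hr
    have h3 : ((N - r : ℕ) : ℝ) / Q = (r : ℝ) * 2 ^ r - (r : ℝ) / Q := by
      rw [hmcast, hNQ]; field_simp; try ring
    have h4 : (r : ℝ) / Q < 1 := by
      rw [div_lt_one hQ0]; exact hrQ
    rw [h1, hlogN, h3]
    nlinarith [h2]
  have hexp : (N : ℝ) ^ r * Q < Real.exp (((N - r : ℕ) : ℝ) / Q) := by
    exact (Real.log_lt_iff_lt_exp (by positivity)).mp hlog
  have hpow : (1 - 1 / Q) ^ (N - r) ≤ Real.exp (-(((N - r : ℕ) : ℝ) / Q)) := by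
    calc (1 - 1 / Q) ^ (N - r) ≤ Real.exp (-(1 / Q)) ^ (N - r) :=
          pow_le_pow_left₀ hθ0 hθe _
    _ = Real.exp (-(((N - r : ℕ) : ℝ) / Q)) := by
        rw [← Real.exp_nat_mul]; ring_nf
  rw [hhalf]
  calc (N : ℝ) ^ r * Q * (1 - 1 / Q) ^ (N - r)
      ≤ (N : ℝ) ^ r * Q * Real.exp (-(((N - r : ℕ) : ℝ) / Q)) := by
        apply mul_le_mul_of_nonneg_left hpow (by positivity)
    _ < Real.exp (((N - r : ℕ) : ℝ) / Q) * Real.exp (-(((N - r : ℕ) : ℝ) / Q)) := by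
        apply mul_lt_mul_of_pos_right hexp (Real.exp_pos _)
    _ = 1 := by rw [← Real.exp_add]; ring_nf; exact Real.exp_zero

lemma part1 (r n : ℕ) (hr : 5 ≤ r) (hn : r * 2 ^ r * 2 ^ 2 ^ r ≤ n) :
    (n : ℝ) ^ r * 2 ^ 2 ^ r * (1 - (1 / 2 : ℝ) ^ 2 ^ r) ^ (n - r) < 1 := by
  induction n, hn using Nat.le_induction with
  | base => exact_mod_cast base_ineq r hr
  | succ n hn ih =>
    set Q : ℝ := 2 ^ 2 ^ r with hQ
    have hQ0 : (0 : ℝ) < Q := by positivity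
    have hhalf : (1 - (1 / 2 : ℝ) ^ 2 ^ r) = 1 - 1 / Q := by rw [hQ, div_pow, one_pow]
    rw [hhalf] at ih ⊢
    have hθ0 : (0 : ℝ) ≤ 1 - 1 / Q := by
      have h2 : (2:ℝ) ≤ Q := by
        rw [hQ]
        calc (2:ℝ) = 2 ^ 1 := (pow_one 2).symm
        _ ≤ 2 ^ 2 ^ r := pow_le_pow_right₀ one_le_two Nat.one_le_two_pow
      have : 1 / Q ≤ 1 := by rw [div_le_one hQ0]; linarith
      linarith
    have hrn : r ≤ n := by
      refine le_trans ?_ hn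
      calc r = r * 1 * 1 := by ring
      _ ≤ r * 2 ^ r * 2 ^ 2 ^ r :=
        Nat.mul_le_mul (Nat.mul_le_mul_left r Nat.one_le_two_pow) Nat.one_le_two_pow
    have hsub : n + 1 - r = (n - r) + 1 := by omega
    have hn0 : (0 : ℝ) < (n : ℝ) := by
      have : 0 < n := by
        have : 0 < r * 2 ^ r * 2 ^ 2 ^ r := by positivity
        omega
      exact_mod_cast this
    -- Bernoulli step
    have hkey : ((n : ℝ) + 1) ^ r * (1 - 1 / Q) ≤ (n : ℝ) ^ r := by
      have hb := one_add_mul_le_pow (a := -(1 / ((n : ℝ) + 1))) (by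
        have h01 : 1 / ((n:ℝ)+1) ≤ 1 := by
          rw [div_le_one (by positivity)]; linarith
        linarith) r
      have he : (1 : ℝ) + -(1 / ((n : ℝ) + 1)) = (n : ℝ) / ((n : ℝ) + 1) := by
        field_simp; ring
      rw [he] at hb
      have hq : 1 - 1 / Q ≤ 1 + (r : ℝ) * -(1 / ((n : ℝ) + 1)) := by
        have hrQn : (r : ℝ) * Q ≤ (n : ℝ) + 1 := by
          have h1 : r * 2 ^ 2 ^ r ≤ n := by
            refine le_trans ?_ hn
            calc r * 2 ^ 2 ^ r = r * 1 * 2 ^ 2 ^ r := by ring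
            _ ≤ r * 2 ^ r * 2 ^ 2 ^ r :=
              Nat.mul_le_mul (Nat.mul_le_mul_left r Nat.one_le_two_pow) le_rfl
          have : (r : ℝ) * Q ≤ (n : ℝ) := by
            rw [hQ]; exact_mod_cast h1
          linarith
        have h2 : (r : ℝ) / ((n : ℝ) + 1) ≤ 1 / Q := by
          rw [div_le_div_iff₀ (by positivity) hQ0]
          nlinarith
        have : (r : ℝ) * -(1 / ((n : ℝ) + 1)) = -((r : ℝ) / ((n : ℝ) + 1)) := by ring
        rw [this]; linarith
      have hc : 1 - 1 / Q ≤ ((n : ℝ) / ((n : ℝ) + 1)) ^ r := le_trans hq hb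
      calc ((n : ℝ) + 1) ^ r * (1 - 1 / Q) ≤ ((n : ℝ) + 1) ^ r * ((n : ℝ) / ((n : ℝ) + 1)) ^ r :=
            mul_le_mul_of_nonneg_left hc (by positivity)
      _ = (n : ℝ) ^ r := by
          rw [← mul_pow]
          congr 1
          field_simp
    rw [hsub]
    push_cast
    calc ((n : ℝ) + 1) ^ r * Q * (1 - 1 / Q) ^ (n - r + 1)
        = (((n : ℝ) + 1) ^ r * (1 - 1 / Q)) * (Q * (1 - 1 / Q) ^ (n - r)) := by ring
      _ ≤ (n : ℝ) ^ r * (Q * (1 - 1 / Q) ^ (n - r)) := by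
          apply mul_le_mul_of_nonneg_right hkey (by positivity)
      _ = (n : ℝ) ^ r * Q * (1 - 1 / Q) ^ (n - r) := by ring
      _ < 1 := ih

end Analytic

open AmpleAux

open SimplicialComplex in
/-- **Existence of `r`-ample complexes via the probabilistic method** (Proposition 5.4):
for every `r ≥ 5` and every `n ≥ r·2^r·2^(2^r)` the failure-probability bound
`n^r · 2^(2^r) · (1 − 2^(−2^r))^(n−r)` is less than `1`, and consequently there exists
an `r`-ample simplicial complex with exactly `n` vertices. -/
theorem exists_ample_complex (r n : ℕ) (hr : 5 ≤ r) (hn : r * 2 ^ r * 2 ^ 2 ^ r ≤ n) :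
    (n : ℝ) ^ r * 2 ^ 2 ^ r * (1 - (1 / 2 : ℝ) ^ 2 ^ r) ^ (n - r) < 1 ∧
    ∃ X : SimplicialComplex (Fin n), X.vertexSet = Set.univ ∧ X.IsAmple r := by
  have hp1 := part1 r n hr hn
  refine ⟨hp1, ?_⟩
  classical
  have hrn : r ≤ n := by
    refine le_trans ?_ hn
    calc r = r * 1 * 1 := by ring
    _ ≤ r * 2 ^ r * 2 ^ 2 ^ r :=
      Nat.mul_le_mul (Nat.mul_le_mul_left r Nat.one_le_two_pow) Nat.one_le_two_pow
  set m := n - r with hm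
  have h1le : (1 : ℕ) ≤ 2 ^ 2 ^ r := Nat.one_le_two_pow
  -- the key natural number inequality
  have hkey : n ^ r * 2 ^ 2 ^ r * (2 ^ 2 ^ r - 1) ^ m < (2 ^ 2 ^ r) ^ m := by
    have hQ0 : (0 : ℝ) < (2 : ℝ) ^ 2 ^ r := by positivity
    have hQm : (0 : ℝ) < ((2 : ℝ) ^ 2 ^ r) ^ m := by positivity
    have hθ : (1 - (1 / 2 : ℝ) ^ 2 ^ r) = ((2 : ℝ) ^ 2 ^ r - 1) / 2 ^ 2 ^ r := by
      rw [div_pow, one_pow]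
      field_simp
    rw [hθ, div_pow] at hp1
    have heq : (n : ℝ) ^ r * 2 ^ 2 ^ r * (((2 : ℝ) ^ 2 ^ r - 1) ^ m / ((2 : ℝ) ^ 2 ^ r) ^ m)
        = ((n : ℝ) ^ r * 2 ^ 2 ^ r * ((2 : ℝ) ^ 2 ^ r - 1) ^ m) / ((2 : ℝ) ^ 2 ^ r) ^ m := by
      ring
    rw [heq, div_lt_one hQm] at hp1
    rw [← Nat.cast_lt (α := ℝ)]
    push_cast [Nat.cast_sub h1le]
    convert hp1 using 2 <;> push_cast <;> ring
  by_contra hno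
  push_neg at hno
  have hall : ∀ f : Om n, ¬ (cx f).IsAmple r := fun f hamp => hno (cx f) (vertexSet_cx f) hamp
  set 𝒜 : Finset (Fin n) → Finset (Finset (Finset (Fin n))) := fun U =>
    (U.powerset.powerset).filter (fun A => ∀ s ∈ A, ∀ t ∈ s.powerset, t ≠ ∅ → t ∈ A) with h𝒜
  set badAll : Finset (Om n) := (Finset.univ.powersetCard r).biUnion
    (fun U => (𝒜 U).biUnion (fun A => Bad U A Uᶜ)) with hbadAll
  have hmem : ∀ f : Om n, f ∈ badAll := by
    intro f
    obtain ⟨U, hU, A, hAU, hdc, hfBad⟩ := not_ample_mem_bad (by omega) hrn (hall f)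
    refine Finset.mem_biUnion.mpr ⟨U, ?_, Finset.mem_biUnion.mpr ⟨A, ?_, hfBad⟩⟩
    · exact Finset.mem_powersetCard_univ.mpr hU
    · refine Finset.mem_filter.mpr ⟨Finset.mem_powerset.mpr hAU, ?_⟩
      intro s hs t ht h0
      exact hdc s hs t (Finset.mem_powerset.mp ht) h0
  have hT : (Finset.univ : Finset (Om n)).card = 2 ^ 2 ^ n := by
    rw [Finset.card_univ, Fintype.card_fun, Fintype.card_bool, Fintype.card_finset,
      Fintype.card_fin]
  have hbound : ∀ U ∈ Finset.univ.powersetCard r, ∀ A ∈ 𝒜 U,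
      (Bad U A Uᶜ).card * (2 ^ 2 ^ r) ^ m ≤ 2 ^ 2 ^ n * (2 ^ 2 ^ r - 1) ^ m := by
    intro U hU A hA
    have hUcard : U.card = r := Finset.mem_powersetCard_univ.mp hU
    have hdc : ∀ s ∈ A, ∀ t ⊆ s, t ≠ ∅ → t ∈ A := by
      intro s hs t hts h0
      exact (Finset.mem_filter.mp hA).2 s hs t (Finset.mem_powerset.mpr hts) h0
    have hcompl : (Uᶜ : Finset (Fin n)).card = m := by
      rw [Finset.card_compl, Fintype.card_fin, hUcard]
    have := Bad_bound hdc Uᶜ disjoint_compl_left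
    rw [hUcard, hcompl] at this
    exact this
  have hAcard : ∀ U ∈ Finset.univ.powersetCard r, (𝒜 U).card ≤ 2 ^ 2 ^ r := by
    intro U hU
    have hUcard : U.card = r := Finset.mem_powersetCard_univ.mp hU
    calc (𝒜 U).card ≤ (U.powerset.powerset).card := Finset.card_filter_le _ _
      _ = 2 ^ 2 ^ r := by rw [Finset.card_powerset, Finset.card_powerset, hUcard]
  -- union bound
  have hcount : badAll.card * (2 ^ 2 ^ r) ^ m
      ≤ n ^ r * (2 ^ 2 ^ r * (2 ^ 2 ^ n * (2 ^ 2 ^ r - 1) ^ m)) := by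
    calc badAll.card * (2 ^ 2 ^ r) ^ m
        ≤ (∑ U ∈ Finset.univ.powersetCard r,
            ((𝒜 U).biUnion (fun A => Bad U A Uᶜ)).card) * (2 ^ 2 ^ r) ^ m :=
          Nat.mul_le_mul_right _ Finset.card_biUnion_le
      _ = ∑ U ∈ Finset.univ.powersetCard r,
            (((𝒜 U).biUnion (fun A => Bad U A Uᶜ)).card * (2 ^ 2 ^ r) ^ m) := by
          rw [Finset.sum_mul]
      _ ≤ ∑ U ∈ Finset.univ.powersetCard r,
            (2 ^ 2 ^ r * (2 ^ 2 ^ n * (2 ^ 2 ^ r - 1) ^ m)) := by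
          refine Finset.sum_le_sum fun U hU => ?_
          calc ((𝒜 U).biUnion (fun A => Bad U A Uᶜ)).card * (2 ^ 2 ^ r) ^ m
              ≤ (∑ A ∈ 𝒜 U, (Bad U A Uᶜ).card) * (2 ^ 2 ^ r) ^ m :=
                Nat.mul_le_mul_right _ Finset.card_biUnion_le
            _ = ∑ A ∈ 𝒜 U, ((Bad U A Uᶜ).card * (2 ^ 2 ^ r) ^ m) := by
                rw [Finset.sum_mul]
            _ ≤ ∑ A ∈ 𝒜 U, (2 ^ 2 ^ n * (2 ^ 2 ^ r - 1) ^ m) :=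
                Finset.sum_le_sum fun A hA => hbound U hU A hA
            _ = (𝒜 U).card * (2 ^ 2 ^ n * (2 ^ 2 ^ r - 1) ^ m) := by
                rw [Finset.sum_const, smul_eq_mul]
            _ ≤ 2 ^ 2 ^ r * (2 ^ 2 ^ n * (2 ^ 2 ^ r - 1) ^ m) :=
                Nat.mul_le_mul_right _ (hAcard U hU)
      _ = (Finset.univ.powersetCard r).card * (2 ^ 2 ^ r * (2 ^ 2 ^ n * (2 ^ 2 ^ r - 1) ^ m)) := by
          rw [Finset.sum_const, smul_eq_mul]
      _ ≤ n ^ r * (2 ^ 2 ^ r * (2 ^ 2 ^ n * (2 ^ 2 ^ r - 1) ^ m)) := by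
          refine Nat.mul_le_mul_right _ ?_
          rw [Finset.card_powersetCard, Finset.card_univ, Fintype.card_fin]
          exact Nat.choose_le_pow n r
  have huniv : 2 ^ 2 ^ n ≤ badAll.card := by
    rw [← hT]
    exact Finset.card_le_card fun f _ => hmem f
  have hfinal : 2 ^ 2 ^ n * (2 ^ 2 ^ r) ^ m < 2 ^ 2 ^ n * (2 ^ 2 ^ r) ^ m := by
    calc 2 ^ 2 ^ n * (2 ^ 2 ^ r) ^ m ≤ badAll.card * (2 ^ 2 ^ r) ^ m :=
          Nat.mul_le_mul_right _ huniv
      _ ≤ n ^ r * (2 ^ 2 ^ r * (2 ^ 2 ^ n * (2 ^ 2 ^ r - 1) ^ m)) := hcount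
      _ = 2 ^ 2 ^ n * (n ^ r * 2 ^ 2 ^ r * (2 ^ 2 ^ r - 1) ^ m) := by ring
      _ < 2 ^ 2 ^ n * (2 ^ 2 ^ r) ^ m :=
          Nat.mul_lt_mul_of_le_of_lt (le_refl _) hkey (by positivity)
  exact lt_irrefl _ hfinal
end
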